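/- arXiv:1808.08009 — 5 statements merged into one kernel-verified Lean document; each statement's English description precedes it below -/
import Mathlib

section
/- For every complex number v with |v| ≤ 1, the series ∑_{m=0}^∞ (2m)! v^{2m+1} / (4^m (m!)^2 (2m+1)) converges absolutely and equals arcsin(v). -/
open Complex

/-- The principal branch of the complex arcsine. -/
noncomputable def carcsin (z : ℂ) : ℂ :=
  -Complex.I * Complex.log (Complex.I * z + (1 - z ^ 2) ^ ((1 : ℂ) / 2))



/-- central binomial coefficient over 4^m -/
noncomputable def asinB (m : ℕ) : ℝ :=
  (Nat.factorial (2 * m)) / (4 ^ m * (Nat.factorial m) ^ 2)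

lemma asinB_pos (m : ℕ) : 0 < asinB m := by
  apply div_pos
  · exact_mod_cast Nat.factorial_pos _
  · positivity

lemma asinB_zero : asinB 0 = 1 := by simp [asinB, Nat.factorial]

lemma asinB_rec (m : ℕ) : (2 * m + 2) * asinB (m + 1) = (2 * m + 1) * asinB m := by
  have h1 : Nat.factorial (2 * (m + 1)) = (2*m+2) * ((2*m+1) * Nat.factorial (2*m)) := by
    have : 2 * (m+1) = (2*m+1) + 1 := by ring
    rw [this, Nat.factorial_succ, Nat.factorial_succ]
  have h2 : Nat.factorial (m+1) = (m+1) * Nat.factorial m := Nat.factorial_succ m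
  simp only [asinB, h1, h2]
  have hm : (Nat.factorial m : ℝ) ≠ 0 := by exact_mod_cast (Nat.factorial_pos m).ne'
  have h4 : (4:ℝ)^m ≠ 0 := by positivity
  have hm1 : (m:ℝ)+1 ≠ 0 := by positivity
  field_simp
  push_cast
  ring

lemma asinB_sq (m : ℕ) : asinB m ^ 2 * (m + 1) ≤ 1 := by
  induction m with
  | zero => simp [asinB_zero]
  | succ n ih =>
    have hrec : asinB (n+1) = (2*n+1) / (2*n+2) * asinB n := by
      have h := asinB_rec n
      have : (2*(n:ℝ)+2) ≠ 0 := by positivity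
      field_simp
      linarith [h]
    rw [hrec]
    have hb := asinB_pos n
    have key : ((2*(n:ℝ)+1)/(2*n+2))^2 * ((n:ℝ)+1+1) ≤ ((n:ℝ)+1) := by
      rw [div_pow, div_mul_eq_mul_div, div_le_iff₀ (by positivity)]
      nlinarith [sq_nonneg ((n:ℝ))]
    have cast1 : ((n+1:ℕ):ℝ) + 1 = (n:ℝ)+1+1 := by push_cast; ring
    rw [cast1]
    calc ((2*(n:ℝ)+1)/(2*n+2) * asinB n)^2 * ((n:ℝ)+1+1)
        = asinB n ^2 * (((2*(n:ℝ)+1)/(2*n+2))^2 * ((n:ℝ)+1+1)) := by push_cast; ring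
      _ ≤ asinB n ^2 * ((n:ℝ)+1) := by
          apply mul_le_mul_of_nonneg_left key (by positivity)
      _ ≤ 1 := by exact_mod_cast ih

lemma asinB_le_one (m : ℕ) : asinB m ≤ 1 := by
  have h := asinB_sq m
  have hb := asinB_pos m
  nlinarith [sq_nonneg (asinB m - 1), (show (1:ℝ) ≤ (m:ℝ)+1 by simp [Nat.cast_nonneg])]

/-- asinB m ≤ 1/√(m+1) -/
lemma asinB_le_inv_sqrt (m : ℕ) : asinB m ≤ 1 / Real.sqrt (m + 1) := by
  have h := asinB_sq m
  have hb := asinB_pos m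
  have hs : Real.sqrt ((m:ℝ)+1) > 0 := Real.sqrt_pos.mpr (by positivity)
  rw [le_div_iff₀ hs]
  nlinarith [Real.sq_sqrt (show (0:ℝ) ≤ (m:ℝ)+1 by positivity), hs]


noncomputable def asinA (m : ℕ) : ℝ := asinB m / (2 * m + 1)

lemma asinA_pos (m : ℕ) : 0 < asinA m := div_pos (asinB_pos m) (by positivity)

lemma asinA_le (m : ℕ) : asinA m ≤ 1 / (((m:ℝ) + 1) * Real.sqrt (m + 1)) := by
  have h1 : asinA m ≤ asinB m / ((m:ℝ) + 1) := by
    apply div_le_div_of_nonneg_left (asinB_pos m).le (by positivity) (by push_cast; linarith)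
  refine h1.trans ?_
  rw [div_le_div_iff₀ (by positivity) (by positivity)]
  have := asinB_le_inv_sqrt m
  have hs : (0:ℝ) < Real.sqrt ((m:ℝ)+1) := Real.sqrt_pos.mpr (by positivity)
  have hm : (0:ℝ) < (m:ℝ)+1 := by positivity
  calc asinB m * (((m:ℝ) + 1) * Real.sqrt (↑m + 1))
      ≤ (1 / Real.sqrt (↑m+1)) * (((m:ℝ) + 1) * Real.sqrt (↑m + 1)) := by
        apply mul_le_mul_of_nonneg_right this (by positivity)
    _ = 1 * ((m:ℝ)+1) := by field_simp
  
lemma summable_asinA : Summable asinA := by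
  have hs : Summable (fun n : ℕ => 1 / (n:ℝ) ^ ((3:ℝ)/2)) :=
    Real.summable_one_div_nat_rpow.mpr (by norm_num)
  have hs2 : Summable (fun n : ℕ => 1 / ((n+1:ℕ):ℝ) ^ ((3:ℝ)/2)) :=
    hs.comp_injective Nat.succ_injective
  have heq : ∀ n : ℕ, 1 / ((n+1:ℕ):ℝ) ^ ((3:ℝ)/2) = 1 / (((n:ℝ)+1) * Real.sqrt (n+1)) := by
    intro n
    have hp : (0:ℝ) < (n:ℝ)+1 := by positivity
    congr 1
    have hc : ((n+1:ℕ):ℝ) = (n:ℝ)+1 := by push_cast; ring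
    rw [hc, show ((3:ℝ)/2) = 1 + 1/2 by norm_num, Real.rpow_add hp, Real.rpow_one,
      Real.sqrt_eq_rpow]
  rw [show asinA = fun m => asinA m from rfl]
  apply Summable.of_nonneg_of_le (fun m => (asinA_pos m).le)
    (fun m => asinA_le m)
  simpa only [heq] using hs2

lemma summable_asinA_mul (z : ℂ) (hz : ‖z‖ ≤ 1) :
    Summable (fun m : ℕ => ‖(asinA m : ℂ) * z ^ (2*m+1)‖) := by
  apply Summable.of_nonneg_of_le (fun m => norm_nonneg _) _ summable_asinA
  intro m
  rw [norm_mul, Complex.norm_real, Real.norm_of_nonneg (asinA_pos m).le, norm_pow]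
  calc asinA m * ‖z‖ ^ (2*m+1) ≤ asinA m * 1 := by
        apply mul_le_mul_of_nonneg_left _ (asinA_pos m).le
        exact pow_le_one₀ (norm_nonneg z) hz
    _ = asinA m := mul_one _

lemma summable_geom2 {r : ℝ} (h0 : 0 ≤ r) (h1 : r < 1) :
    Summable (fun m : ℕ => r ^ (2*m)) := by
  have : Summable (fun m : ℕ => (r^2) ^ m) :=
    summable_geometric_of_lt_one (by positivity) (by nlinarith)
  simpa [pow_mul] using this

lemma summable_geom3 {r : ℝ} (h0 : 0 ≤ r) (h1 : r < 1) :
    Summable (fun m : ℕ => 2*(m:ℝ) * r ^ (2*m-1)) := by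
  have hs : Summable (fun m : ℕ => (m:ℝ) * r ^ m) := by
    have := summable_pow_mul_geometric_of_norm_lt_one (R := ℝ) 1 (r := r)
      (by rwa [Real.norm_of_nonneg h0])
    simpa using this
  apply Summable.of_nonneg_of_le (fun m => by positivity) _ (hs.mul_left 2)
  intro m
  rcases Nat.eq_zero_or_pos m with hm | hm
  · simp [hm]
  · have : r ^ (2*m-1) ≤ r ^ m := by
      apply pow_le_pow_of_le_one h0 h1.le
      omega
    calc 2*(m:ℝ) * r ^ (2*m-1) ≤ 2*(m:ℝ) * r ^ m := by
          apply mul_le_mul_of_nonneg_left this (by positivity)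
      _ = 2 * ((m:ℝ) * r ^ m) := by ring


noncomputable def asinF (z : ℂ) : ℂ := ∑' m : ℕ, (asinA m : ℂ) * z ^ (2*m+1)
noncomputable def asinH (z : ℂ) : ℂ := ∑' m : ℕ, (asinB m : ℂ) * z ^ (2*m)
noncomputable def asinH' (z : ℂ) : ℂ := ∑' m : ℕ, (2*(m:ℂ)) * (asinB m : ℂ) * z ^ (2*m-1)

lemma two_m_one_ne (m : ℕ) : (2*(m:ℂ)+1) ≠ 0 := by
  have : ((2*m+1:ℕ):ℂ) ≠ 0 := Nat.cast_ne_zero.mpr (by omega)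
  push_cast at this; exact this

lemma asinA_cast (m : ℕ) : (asinA m : ℂ) * (2*(m:ℂ)+1) = (asinB m : ℂ) := by
  have h := two_m_one_ne m
  rw [asinA]
  push_cast
  field_simp

-- norm bounds
lemma normB (m : ℕ) {z : ℂ} {r : ℝ} (hz : ‖z‖ ≤ r) :
    ‖(asinB m : ℂ) * z ^ (2*m)‖ ≤ r ^ (2*m) := by
  rw [norm_mul, Complex.norm_real, Real.norm_of_nonneg (asinB_pos m).le, norm_pow]
  calc asinB m * ‖z‖ ^ (2*m) ≤ 1 * r ^ (2*m) := by
        apply mul_le_mul (asinB_le_one m) (pow_le_pow_left₀ (norm_nonneg z) hz _)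
          (by positivity) one_pos.le
    _ = r ^ (2*m) := one_mul _

lemma normB' (m : ℕ) {z : ℂ} {r : ℝ} (hz : ‖z‖ ≤ r) :
    ‖(2*(m:ℂ)) * (asinB m : ℂ) * z ^ (2*m-1)‖ ≤ 2*(m:ℝ) * r ^ (2*m-1) := by
  have hr : 0 ≤ r := le_trans (norm_nonneg z) hz
  rw [norm_mul, norm_mul, norm_pow]
  have h1 : ‖(2*(m:ℂ))‖ = 2*(m:ℝ) := by
    rw [show (2*(m:ℂ)) = ((2*(m:ℕ) : ℕ) : ℂ) by push_cast; ring]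
    rw [Complex.norm_natCast]; push_cast; ring
  rw [h1, Complex.norm_real, Real.norm_of_nonneg (asinB_pos m).le]
  calc 2*(m:ℝ) * asinB m * ‖z‖^(2*m-1) ≤ 2*(m:ℝ) * 1 * r^(2*m-1) := by
        apply mul_le_mul (mul_le_mul_of_nonneg_left (asinB_le_one m) (by positivity))
          (pow_le_pow_left₀ (norm_nonneg z) hz _) (by positivity) (by positivity)
    _ = 2*(m:ℝ) * r ^ (2*m-1) := by ring

lemma summable_H (z : ℂ) (hz : ‖z‖ < 1) :
    Summable (fun m : ℕ => (asinB m : ℂ) * z ^ (2*m)) := by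
  apply Summable.of_norm
  exact Summable.of_nonneg_of_le (fun m => norm_nonneg _) (fun m => normB m le_rfl)
    (summable_geom2 (norm_nonneg z) hz)

lemma summable_H' (z : ℂ) (hz : ‖z‖ < 1) :
    Summable (fun m : ℕ => (2*(m:ℂ)) * (asinB m : ℂ) * z ^ (2*m-1)) := by
  apply Summable.of_norm
  exact Summable.of_nonneg_of_le (fun m => norm_nonneg _) (fun m => normB' m le_rfl)
    (summable_geom3 (norm_nonneg z) hz)

-- derivative of asinF is asinH
lemma hasDerivAt_asinF {y : ℂ} (hy : ‖y‖ < 1) : HasDerivAt asinF (asinH y) y := by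
  set r : ℝ := (‖y‖ + 1) / 2 with hr
  have hr0 : 0 ≤ r := by positivity
  have hr1 : r < 1 := by rw [hr]; linarith
  have hyr : ‖y‖ < r := by rw [hr]; linarith
  have hball : y ∈ Metric.ball (0:ℂ) r := by simpa [Metric.mem_ball] using hyr
  have := hasDerivAt_tsum_of_isPreconnected
    (u := fun m : ℕ => r ^ (2*m))
    (g := fun m z => (asinA m : ℂ) * z ^ (2*m+1))
    (g' := fun m z => (asinB m : ℂ) * z ^ (2*m))
    (summable_geom2 hr0 hr1) Metric.isOpen_ball
    ((convex_ball (0:ℂ) r).isPreconnected)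
    (fun m z hz => ?_) (fun m z hz => ?_) (Metric.mem_ball_self (lt_of_le_of_lt (norm_nonneg y) hyr)) ?_ hball
  · exact this
  · have h := ((hasDerivAt_pow (2*m+1) z).const_mul (asinA m : ℂ))
    have he : (asinA m : ℂ) * ((2*m+1 : ℕ) * z ^ (2*m+1-1)) = (asinB m : ℂ) * z ^ (2*m) := by
      rw [show 2*m+1-1 = 2*m from rfl, ← asinA_cast m]
      push_cast; ring
    rwa [he] at h
  · exact normB m (le_of_lt (by simpa [Metric.mem_ball] using hz))
  · apply Summable.of_norm
    apply Summable.of_nonneg_of_le (fun m => norm_nonneg _) _ summable_asinA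
    intro m
    simp [asinA_pos m, le_of_lt (asinA_pos m), abs_of_pos (asinA_pos m)]

-- derivative of asinH is asinH'
lemma hasDerivAt_asinH {y : ℂ} (hy : ‖y‖ < 1) : HasDerivAt asinH (asinH' y) y := by
  set r : ℝ := (‖y‖ + 1) / 2 with hr
  have hr0 : 0 ≤ r := by positivity
  have hr1 : r < 1 := by rw [hr]; linarith
  have hyr : ‖y‖ < r := by rw [hr]; linarith
  have hball : y ∈ Metric.ball (0:ℂ) r := by simpa [Metric.mem_ball] using hyr
  have := hasDerivAt_tsum_of_isPreconnected
    (u := fun m : ℕ => 2*(m:ℝ) * r ^ (2*m-1))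
    (g := fun m z => (asinB m : ℂ) * z ^ (2*m))
    (g' := fun m z => (2*(m:ℂ)) * (asinB m : ℂ) * z ^ (2*m-1))
    (summable_geom3 hr0 hr1) Metric.isOpen_ball
    ((convex_ball (0:ℂ) r).isPreconnected)
    (fun m z hz => ?_) (fun m z hz => ?_) (Metric.mem_ball_self (lt_of_le_of_lt (norm_nonneg y) hyr)) ?_ hball
  · exact this
  · have h := ((hasDerivAt_pow (2*m) z).const_mul (asinB m : ℂ))
    have he : (asinB m : ℂ) * ((2*m : ℕ) * z ^ (2*m-1)) = (2*(m:ℂ)) * (asinB m : ℂ) * z ^ (2*m-1) := by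
      push_cast; ring
    rwa [he] at h
  · exact normB' m (le_of_lt (by simpa [Metric.mem_ball] using hz))
  · exact summable_H 0 (by simp)


lemma asinB_rec_c (m : ℕ) : (2*(m:ℂ)+2) * (asinB (m+1) : ℂ) = (2*(m:ℂ)+1) * (asinB m : ℂ) := by
  have h := asinB_rec m
  have : ((2*(m:ℝ)+2) * asinB (m+1) : ℝ) = ((2*(m:ℝ)+1) * asinB m : ℝ) := by push_cast at h ⊢; linarith
  exact_mod_cast congrArg (Complex.ofReal) this

lemma asinH_ode {z : ℂ} (hz : ‖z‖ < 1) : (1 - z^2) * asinH' z = z * asinH z := by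
  have h3 := summable_H' z hz
  have h2 := summable_H z hz
  -- shift the index in asinH'
  have hshift : asinH' z = ∑' m : ℕ, (2*((m:ℂ)+1)) * (asinB (m+1) : ℂ) * z ^ (2*m+1) := by
    rw [asinH', Summable.tsum_eq_zero_add h3]
    simp only [Nat.cast_zero, mul_zero, zero_mul, zero_add]
    apply tsum_congr
    intro m
    have : 2*(m+1) - 1 = 2*m+1 := by omega
    rw [this]
    push_cast
    ring
  -- termwise identity
  have hterm : ∀ m : ℕ, (2*((m:ℂ)+1)) * (asinB (m+1) : ℂ) * z ^ (2*m+1)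
      = z^2 * ((2*(m:ℂ)) * (asinB m : ℂ) * z ^ (2*m-1)) + z * ((asinB m : ℂ) * z ^ (2*m)) := by
    intro m
    have hrec := asinB_rec_c m
    rcases Nat.eq_zero_or_pos m with hm | hm
    · subst hm
      have h0 : (2:ℂ) * (asinB 1 : ℂ) = (asinB 0 : ℂ) := by
        have := asinB_rec_c 0
        push_cast at this
        linear_combination this
      simp only [Nat.cast_zero, mul_zero, zero_mul, zero_add, pow_one, pow_zero, mul_one]
      push_cast
      linear_combination z * h0
    · have hpow : z^2 * z^(2*m-1) = z^(2*m+1) := by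
        rw [← pow_add]
        congr 1
        omega
      calc (2*((m:ℂ)+1)) * (asinB (m+1) : ℂ) * z ^ (2*m+1)
          = ((2*(m:ℂ)+2) * (asinB (m+1) : ℂ)) * z ^ (2*m+1) := by ring
        _ = ((2*(m:ℂ)+1) * (asinB m : ℂ)) * z ^ (2*m+1) := by rw [hrec]
        _ = (2*(m:ℂ)) * (asinB m : ℂ) * z ^ (2*m+1) + z * ((asinB m : ℂ) * z ^ (2*m)) := by
            rw [show z * ((asinB m : ℂ) * z ^ (2*m)) = (asinB m : ℂ) * z^(2*m+1) by ring]
            ring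
        _ = z^2 * ((2*(m:ℂ)) * (asinB m : ℂ) * z ^ (2*m-1)) + z * ((asinB m : ℂ) * z ^ (2*m)) := by
            rw [mul_comm (z^2), mul_assoc ((2*(m:ℂ)) * (asinB m : ℂ)), mul_comm _ (z^2), hpow]
  have : asinH' z = z^2 * asinH' z + z * asinH z := by
    calc asinH' z
        = ∑' m : ℕ, (2*((m:ℂ)+1)) * (asinB (m+1) : ℂ) * z ^ (2*m+1) := hshift
      _ = ∑' m : ℕ, (z^2 * ((2*(m:ℂ)) * (asinB m : ℂ) * z ^ (2*m-1))
            + z * ((asinB m : ℂ) * z ^ (2*m))) := tsum_congr hterm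
      _ = z^2 * asinH' z + z * asinH z := by
          rw [Summable.tsum_add (h3.mul_left _) (h2.mul_left _), tsum_mul_left, tsum_mul_left]
          rfl
  linear_combination this


lemma norm_sq_re_im (z : ℂ) : z.re^2 + z.im^2 = ‖z‖^2 := by
  rw [Complex.sq_norm, Complex.normSq_apply]; ring

lemma wre {z : ℂ} (hz : ‖z‖ ≤ 1) (h1 : z ≠ 1) (h2 : z ≠ -1) : (z.im)^2 < (1 - z^2).re := by
  have hn : z.re^2 + z.im^2 ≤ 1 := by
    rw [norm_sq_re_im]; nlinarith [norm_nonneg z]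
  have hx : z.re^2 < 1 := by
    rcases lt_or_ge (z.re^2) 1 with h | h
    · exact h
    · exfalso
      have him : z.im = 0 := by nlinarith
      have hre : z.re^2 = 1 := by nlinarith
      have : (z.re - 1) * (z.re + 1) = 0 := by nlinarith
      rcases mul_eq_zero.mp this with h' | h'
      · exact h1 (Complex.ext (by simp only [Complex.one_re]; linarith) (by simp [him]))
      · exact h2 (Complex.ext (by simp only [Complex.neg_re, Complex.one_re]; linarith)
          (by simp [him]))
  have : (1 - z^2).re = 1 - (z.re*z.re - z.im*z.im) := by
    simp [Complex.sub_re, pow_two, Complex.mul_re]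
  rw [this]; nlinarith

lemma wre_pos {z : ℂ} (hz : ‖z‖ < 1) : 0 < (1 - z^2).re := by
  have h1 : z ≠ 1 := by rintro rfl; simp at hz
  have h2 : z ≠ -1 := by rintro rfl; simp at hz
  have := wre hz.le h1 h2
  nlinarith [sq_nonneg z.im]

lemma sqrt_re_pos {w : ℂ} (hw : 0 < w.re) : 0 < (w ^ ((1:ℂ)/2)).re := by
  have hw0 : w ≠ 0 := fun h => by simp [h] at hw
  rw [Complex.cpow_def_of_ne_zero hw0, Complex.exp_re]
  have him : (Complex.log w * ((1:ℂ)/2)).im = Complex.arg w / 2 := by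
    simp [Complex.mul_im, Complex.log_im]
    ring
  have harg : |Complex.arg w| < Real.pi / 2 :=
    Complex.abs_arg_lt_pi_div_two_iff.mpr (Or.inl hw)
  have hcos : 0 < Real.cos ((Complex.log w * ((1:ℂ)/2)).im) := by
    rw [him]
    apply Real.cos_pos_of_mem_Ioo
    constructor
    · rcases abs_lt.mp harg with ⟨h, _⟩
      linarith
    · rcases abs_lt.mp harg with ⟨_, h⟩
      linarith
  positivity

lemma sqrt_mul_self {w : ℂ} (hw : w ≠ 0) : (w ^ ((1:ℂ)/2)) * (w ^ ((1:ℂ)/2)) = w := by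
  rw [← Complex.cpow_add _ _ hw]
  norm_num

lemma sqrt_mul_inv_sqrt {w : ℂ} (hw : w ≠ 0) :
    (w ^ ((1:ℂ)/2)) * (w ^ (-((1:ℂ)/2))) = 1 := by
  rw [← Complex.cpow_add _ _ hw]
  norm_num

lemma w_mul_inv_sqrt {w : ℂ} (hw : w ≠ 0) :
    w * (w ^ (-((1:ℂ)/2))) = w ^ ((1:ℂ)/2) := by
  nth_rewrite 1 [← Complex.cpow_one w]
  rw [← Complex.cpow_add _ _ hw]
  norm_num

lemma inner_re_pos {z : ℂ} (hz : ‖z‖ ≤ 1) (h1 : z ≠ 1) (h2 : z ≠ -1) :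
    0 < (Complex.I * z + (1 - z^2) ^ ((1:ℂ)/2)).re := by
  set w := 1 - z^2 with hwdef
  have hire : (z.im)^2 < w.re := wre hz h1 h2
  have hwre : 0 < w.re := by nlinarith [sq_nonneg z.im]
  have hw0 : w ≠ 0 := fun h => by simp [h] at hwre
  set u := w ^ ((1:ℂ)/2) with hudef
  have hure : 0 < u.re := sqrt_re_pos hwre
  have huu : u * u = w := sqrt_mul_self hw0
  have h3 : u.re * u.re - u.im * u.im = w.re := by
    rw [← huu, Complex.mul_re]
  have hIz : (Complex.I * z).re = -z.im := by simp [Complex.mul_re]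
  rw [Complex.add_re, hIz]
  nlinarith [sq_nonneg (u.re + z.im), sq_nonneg (u.re - z.im)]


lemma ne_one_of_norm_lt {z : ℂ} (hz : ‖z‖ < 1) : z ≠ 1 := by rintro rfl; simp at hz
lemma ne_neg_one_of_norm_lt {z : ℂ} (hz : ‖z‖ < 1) : z ≠ -1 := by rintro rfl; simp at hz

lemma w_ne_zero {z : ℂ} (hz : ‖z‖ < 1) : (1 - z^2) ≠ 0 :=
  fun h => by simpa [h] using wre_pos hz

lemma hasDerivAt_sqrt {z : ℂ} (hz : ‖z‖ < 1) :
    HasDerivAt (fun y : ℂ => (1 - y^2) ^ ((1:ℂ)/2))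
      (-(z * (1 - z^2) ^ (-((1:ℂ)/2)))) z := by
  have hs_inner : HasDerivAt (fun y : ℂ => 1 - y^2) (-(2*z)) z := by
    simpa using ((hasDerivAt_pow 2 z).const_sub 1)
  have h := hs_inner.cpow_const (c := (1:ℂ)/2) (Or.inl (wre_pos hz))
  have heq : (1:ℂ)/2 * (1 - z^2) ^ ((1:ℂ)/2 - 1) * (-(2*z))
      = -(z * (1 - z^2) ^ (-((1:ℂ)/2))) := by
    rw [show ((1:ℂ)/2 - 1) = -((1:ℂ)/2) by norm_num]
    ring
  rwa [heq] at h

lemma hasDerivAt_carcsin {z : ℂ} (hz : ‖z‖ < 1) :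
    HasDerivAt carcsin (((1 - z^2) ^ ((1:ℂ)/2))⁻¹) z := by
  have hw0 := w_ne_zero hz
  have hgd : HasDerivAt (fun y : ℂ => Complex.I * y + (1 - y^2) ^ ((1:ℂ)/2))
      (Complex.I + -(z * (1 - z^2) ^ (-((1:ℂ)/2)))) z := by
    have h1 : HasDerivAt (fun y : ℂ => Complex.I * y) Complex.I z := by
      simpa using (hasDerivAt_id z).const_mul Complex.I
    exact h1.add (hasDerivAt_sqrt hz)
  have hmem : (Complex.I * z + (1 - z^2) ^ ((1:ℂ)/2)) ∈ Complex.slitPlane :=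
    Or.inl (inner_re_pos hz.le (ne_one_of_norm_lt hz) (ne_neg_one_of_norm_lt hz))
  have hlog := hgd.clog hmem
  have h := hlog.const_mul (-Complex.I)
  have hval : -Complex.I * ((Complex.I + -(z * (1 - z^2) ^ (-((1:ℂ)/2)))) /
      (Complex.I * z + (1 - z^2) ^ ((1:ℂ)/2))) = ((1 - z^2) ^ ((1:ℂ)/2))⁻¹ := by
    set w := 1 - z^2
    set u := w ^ ((1:ℂ)/2)
    set e := w ^ (-((1:ℂ)/2))
    have hue : u * e = 1 := sqrt_mul_inv_sqrt hw0
    have hgz : Complex.I * z + u ≠ 0 := by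
      have := inner_re_pos hz.le (ne_one_of_norm_lt hz) (ne_neg_one_of_norm_lt hz)
      intro h; rw [h] at this; simp at this
    have hu0 : u ≠ 0 := by
      intro h; rw [h, zero_mul] at hue; exact zero_ne_one hue
    field_simp
    ring_nf
    linear_combination (Complex.I * z) * hue - u * Complex.I_sq
  rw [hval] at h
  exact h

lemma asinH_zero : asinH 0 = 1 := by
  rw [asinH, tsum_eq_single 0]
  · simp [asinB_zero]
  · intro m hm
    have : 2*m ≠ 0 := by omega
    simp [zero_pow this]

lemma asinH_mul_sqrt {z : ℂ} (hz : ‖z‖ < 1) : asinH z * (1 - z^2) ^ ((1:ℂ)/2) = 1 := by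
  set Q := fun y : ℂ => asinH y * (1 - y^2) ^ ((1:ℂ)/2) with hQdef
  have hQ' : ∀ y ∈ Metric.ball (0:ℂ) 1, HasDerivWithinAt Q 0 (Metric.ball (0:ℂ) 1) y := by
    intro y hy
    rw [Metric.mem_ball, dist_zero_right] at hy
    have hw0 := w_ne_zero hy
    have hd : HasDerivAt Q (asinH' y * ((1 - y^2) ^ ((1:ℂ)/2))
        + asinH y * (-(y * (1 - y^2) ^ (-((1:ℂ)/2))))) y :=
      (hasDerivAt_asinH hy).mul (hasDerivAt_sqrt hy)
    have hzero : asinH' y * ((1 - y^2) ^ ((1:ℂ)/2))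
        + asinH y * (-(y * (1 - y^2) ^ (-((1:ℂ)/2)))) = 0 := by
      have hode := asinH_ode hy
      have hws : (1 - y^2) * ((1 - y^2) ^ (-((1:ℂ)/2))) = (1 - y^2) ^ ((1:ℂ)/2) :=
        w_mul_inv_sqrt hw0
      linear_combination ((1 - y^2) ^ (-((1:ℂ)/2))) * hode - asinH' y * hws
    rw [hzero] at hd
    exact hd.hasDerivWithinAt
  have key : ∀ y ∈ Metric.ball (0:ℂ) 1, Q y = Q 0 := by
    intro y hy
    have h0 : (0:ℂ) ∈ Metric.ball (0:ℂ) 1 := by simp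
    have := (convex_ball (0:ℂ) 1).norm_image_sub_le_of_norm_hasDerivWithin_le
      (f := Q) (C := 0) (fun x hx => hQ' x hx) (fun x hx => by simp) h0 hy
    exact sub_eq_zero.mp (norm_le_zero_iff.mp (by simpa using this))
  have hQ0 : Q 0 = 1 := by
    simp [hQdef, asinH_zero, Complex.one_cpow]
  have := key z (by simpa [Metric.mem_ball, dist_zero_right] using hz)
  rw [hQ0] at this
  exact this

lemma carcsin_zero : carcsin 0 = 0 := by
  simp [carcsin, Complex.one_cpow]

lemma asinF_zero : asinF 0 = 0 := by
  rw [asinF]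
  convert tsum_zero with m
  simp

lemma interior_eq {z : ℂ} (hz : ‖z‖ < 1) : asinF z = carcsin z := by
  set D := fun y : ℂ => asinF y - carcsin y with hDdef
  have hD' : ∀ y ∈ Metric.ball (0:ℂ) 1, HasDerivWithinAt D 0 (Metric.ball (0:ℂ) 1) y := by
    intro y hy
    rw [Metric.mem_ball, dist_zero_right] at hy
    have hd : HasDerivAt D (asinH y - ((1 - y^2) ^ ((1:ℂ)/2))⁻¹) y :=
      (hasDerivAt_asinF hy).sub (hasDerivAt_carcsin hy)
    have hH : asinH y = ((1 - y^2) ^ ((1:ℂ)/2))⁻¹ :=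
      eq_inv_of_mul_eq_one_left (by
        have := asinH_mul_sqrt hy
        exact this)
    rw [hH, sub_self] at hd
    exact hd.hasDerivWithinAt
  have key : ∀ y ∈ Metric.ball (0:ℂ) 1, D y = D 0 := by
    intro y hy
    have h0 : (0:ℂ) ∈ Metric.ball (0:ℂ) 1 := by simp
    have := (convex_ball (0:ℂ) 1).norm_image_sub_le_of_norm_hasDerivWithin_le
      (f := D) (C := 0) (fun x hx => hD' x hx) (fun x hx => by simp) h0 hy
    exact sub_eq_zero.mp (norm_le_zero_iff.mp (by simpa using this))
  have hD0 : D 0 = 0 := by simp [hDdef, asinF_zero, carcsin_zero]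
  have := key z (by simpa [Metric.mem_ball, dist_zero_right] using hz)
  rw [hD0, hDdef] at this
  exact sub_eq_zero.mp this


lemma asinA_norm_bound (m : ℕ) {z : ℂ} (hz : ‖z‖ ≤ 1) :
    ‖(asinA m : ℂ) * z ^ (2*m+1)‖ ≤ asinA m := by
  rw [norm_mul, Complex.norm_real, Real.norm_of_nonneg (asinA_pos m).le, norm_pow]
  calc asinA m * ‖z‖ ^ (2*m+1) ≤ asinA m * 1 := by
        apply mul_le_mul_of_nonneg_left (pow_le_one₀ (norm_nonneg z) hz) (asinA_pos m).le
    _ = asinA m := mul_one _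

lemma asinF_continuousOn : ContinuousOn asinF (Metric.closedBall (0:ℂ) 1) := by
  apply continuousOn_tsum (u := asinA)
  · intro m
    apply Continuous.continuousOn
    continuity
  · exact summable_asinA
  · intro m z hz
    rw [Metric.mem_closedBall, dist_zero_right] at hz
    exact asinA_norm_bound m hz

lemma carcsin_continuousAt_special {v : ℂ} (hde : 1 - v^2 = 0) (him : (Complex.I * v).im ≠ 0) :
    ContinuousAt carcsin v := by
  have hinner : ContinuousAt (fun z : ℂ => 1 - z^2) v := by fun_prop
  have hsq : ContinuousAt (fun z : ℂ => (1 - z^2) ^ ((1:ℂ)/2)) v := by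
    have hc : ContinuousAt (fun x : ℂ × ℂ => x.1 ^ x.2) (1 - v^2, (1:ℂ)/2) := by
      rw [hde]
      exact Complex.continuousAt_cpow_zero_of_re_pos (by norm_num)
    have hpair : ContinuousAt (fun z : ℂ => ((1 - z^2 : ℂ), ((1:ℂ)/2))) v :=
      hinner.prodMk continuousAt_const
    exact ContinuousAt.comp (g := fun x : ℂ × ℂ => x.1 ^ x.2)
      (f := fun z : ℂ => ((1 - z^2 : ℂ), ((1:ℂ)/2))) hc hpair
  have hgc : ContinuousAt (fun z : ℂ => Complex.I * z + (1 - z^2) ^ ((1:ℂ)/2)) v :=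
    ((continuous_const.mul continuous_id).continuousAt).add hsq
  have hgv : Complex.I * v + (1 - v^2) ^ ((1:ℂ)/2) = Complex.I * v := by
    rw [hde, Complex.zero_cpow (by norm_num : ((1:ℂ)/2) ≠ 0), add_zero]
  have hmem : (Complex.I * v + (1 - v^2) ^ ((1:ℂ)/2)) ∈ Complex.slitPlane := by
    rw [hgv]; right; exact him
  have hlogc : ContinuousAt (fun z : ℂ =>
      Complex.log (Complex.I * z + (1 - z^2) ^ ((1:ℂ)/2))) v :=
    ContinuousAt.comp (g := Complex.log)
      (f := fun z : ℂ => Complex.I * z + (1 - z^2) ^ ((1:ℂ)/2))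
      (continuousAt_clog hmem) hgc
  exact continuousAt_const.mul hlogc

lemma carcsin_continuousAt {v : ℂ} (hv : ‖v‖ ≤ 1) : ContinuousAt carcsin v := by
  have hinner : ContinuousAt (fun z : ℂ => 1 - z^2) v := by fun_prop
  by_cases h1 : v = 1
  · apply carcsin_continuousAt_special (by rw [h1]; ring)
    rw [h1]
    simp [Complex.mul_im]
  by_cases h2 : v = -1
  · apply carcsin_continuousAt_special (by rw [h2]; ring)
    rw [h2]
    simp [Complex.mul_im]
  have hwre : 0 < (1 - v^2).re := by
    have := wre hv h1 h2
    nlinarith [sq_nonneg v.im]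
  have hsq : ContinuousAt (fun z : ℂ => (1 - z^2) ^ ((1:ℂ)/2)) v :=
    ContinuousAt.comp (g := fun w : ℂ => w ^ ((1:ℂ)/2)) (f := fun z : ℂ => 1 - z^2)
      (continuousAt_cpow_const (Or.inl hwre)) hinner
  have hgc : ContinuousAt (fun z : ℂ => Complex.I * z + (1 - z^2) ^ ((1:ℂ)/2)) v :=
    ((continuous_const.mul continuous_id).continuousAt).add hsq
  have hmem : (Complex.I * v + (1 - v^2) ^ ((1:ℂ)/2)) ∈ Complex.slitPlane :=
    Or.inl (inner_re_pos hv h1 h2)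
  have hlogc : ContinuousAt (fun z : ℂ =>
      Complex.log (Complex.I * z + (1 - z^2) ^ ((1:ℂ)/2))) v :=
    ContinuousAt.comp (g := Complex.log)
      (f := fun z : ℂ => Complex.I * z + (1 - z^2) ^ ((1:ℂ)/2))
      (continuousAt_clog hmem) hgc
  exact continuousAt_const.mul hlogc

lemma closed_eq {v : ℂ} (hv : ‖v‖ ≤ 1) : asinF v = carcsin v := by
  rcases lt_or_eq_of_le hv with h | h
  · exact interior_eq h
  set zseq : ℕ → ℂ := fun n => ((1 - 1/((n:ℝ)+2) : ℝ) : ℂ) * v with hzseq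
  have hfrac : ∀ n : ℕ, 0 < 1/((n:ℝ)+2) ∧ 1/((n:ℝ)+2) ≤ 1 := by
    intro n
    constructor
    · positivity
    · rw [div_le_one (by positivity)]
      linarith [Nat.cast_nonneg (α := ℝ) n]
  have hnorm : ∀ n : ℕ, ‖zseq n‖ = 1 - 1/((n:ℝ)+2) := by
    intro n
    obtain ⟨ha, hb⟩ := hfrac n
    rw [hzseq]
    simp only [norm_mul, Complex.norm_real, Real.norm_eq_abs]
    rw [h, mul_one]
    exact abs_of_nonneg (by linarith)
  have hz_mem : ∀ n, zseq n ∈ Metric.closedBall (0:ℂ) 1 := by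
    intro n
    rw [Metric.mem_closedBall, dist_zero_right, hnorm n]
    linarith [(hfrac n).1]
  have hz_lt : ∀ n, ‖zseq n‖ < 1 := by
    intro n
    rw [hnorm n]
    linarith [(hfrac n).1]
  have hz_tend : Filter.Tendsto zseq Filter.atTop (nhds v) := by
    have h0 : Filter.Tendsto (fun n : ℕ => ((n:ℝ)+2)⁻¹) Filter.atTop (nhds 0) :=
      Filter.Tendsto.comp tendsto_inv_atTop_zero
        (Filter.tendsto_atTop_add_const_right _ 2 tendsto_natCast_atTop_atTop)
    have h1 : Filter.Tendsto (fun n : ℕ => (1 - 1/((n:ℝ)+2) : ℝ)) Filter.atTop (nhds 1) := by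
      simpa [one_div] using (tendsto_const_nhds (x := (1:ℝ))).sub h0
    have h2 : Filter.Tendsto (fun n : ℕ => ((1 - 1/((n:ℝ)+2) : ℝ) : ℂ)) Filter.atTop
        (nhds (1:ℂ)) := by
      exact (Complex.continuous_ofReal.tendsto 1).comp h1
    have h3 := h2.mul_const v
    rw [one_mul] at h3
    exact h3
  have hz_tendW : Filter.Tendsto zseq Filter.atTop
      (nhdsWithin v (Metric.closedBall (0:ℂ) 1)) :=
    tendsto_nhdsWithin_of_tendsto_nhds_of_eventually_within _ hz_tend
      (Filter.Eventually.of_forall hz_mem)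
  have hF : Filter.Tendsto (fun n => asinF (zseq n)) Filter.atTop (nhds (asinF v)) :=
    (asinF_continuousOn v (by simpa [Metric.mem_closedBall, dist_zero_right] using hv)).tendsto.comp hz_tendW
  have hC : Filter.Tendsto (fun n => carcsin (zseq n)) Filter.atTop (nhds (carcsin v)) :=
    (carcsin_continuousAt hv).tendsto.comp hz_tend
  have heq : (fun n => asinF (zseq n)) = fun n => carcsin (zseq n) := by
    funext n; exact interior_eq (hz_lt n)
  rw [heq] at hF
  exact tendsto_nhds_unique hF hC

theorem arcsin_series (v : ℂ) (hv : ‖v‖ ≤ 1) :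
    Summable (fun m : ℕ =>
      ‖((Nat.factorial (2 * m) : ℂ) * v ^ (2 * m + 1)) /
        ((4 : ℂ) ^ m * (Nat.factorial m : ℂ) ^ 2 * (2 * m + 1))‖) ∧
    (∑' m : ℕ, ((Nat.factorial (2 * m) : ℂ) * v ^ (2 * m + 1)) /
        ((4 : ℂ) ^ m * (Nat.factorial m : ℂ) ^ 2 * (2 * m + 1))) = carcsin v := by
  have term_eq : ∀ m : ℕ, ((Nat.factorial (2 * m) : ℂ) * v ^ (2 * m + 1)) /
      ((4 : ℂ) ^ m * (Nat.factorial m : ℂ) ^ 2 * (2 * m + 1))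
      = (asinA m : ℂ) * v ^ (2*m+1) := by
    intro m
    have h4 : ((4:ℂ))^m ≠ 0 := by norm_num
    have hf : ((Nat.factorial m : ℂ)) ≠ 0 := Nat.cast_ne_zero.mpr (Nat.factorial_pos m).ne'
    have h21 := two_m_one_ne m
    rw [asinA, asinB]
    push_cast
    field_simp
  constructor
  · apply Summable.congr (summable_asinA_mul v hv)
    intro m
    rw [term_eq m]
  · rw [tsum_congr term_eq]
    exact closed_eq hv
end

section
/- For every complex v with |v| < 1, (1/π) ∫_0^∞ log(1 - v sech(πu)) du = - ∑_{m=1}^∞ v^m B(m/2, 1/2) / (2π^2 m), where B is the Beta function and log is the principal branch. -/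
open Real Complex MeasureTheory

/-- The Euler Beta function, as a real integral. -/
noncomputable def Beta (a b : ℝ) : ℝ :=
  ∫ t in (0 : ℝ)..1, t ^ (a - 1) * (1 - t) ^ (b - 1)

section Aux
open Set

lemma sq_image : (fun t : ℝ => t ^ 2) '' Set.Ioo 0 1 = Set.Ioo 0 1 := by
  ext w
  constructor
  · rintro ⟨a, ⟨ha0, ha1⟩, rfl⟩
    simp only [Set.mem_Ioo]
    constructor <;> nlinarith
  · rintro ⟨hw0, hw1⟩
    refine ⟨Real.sqrt w, ⟨Real.sqrt_pos.2 hw0, ?_⟩, Real.sq_sqrt hw0.le⟩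
    rw [show (1:ℝ) = Real.sqrt 1 by simp]
    exact Real.sqrt_lt_sqrt hw0.le hw1



lemma sech_image : (fun u : ℝ => (Real.cosh (π * u))⁻¹) '' Set.Ioi 0 = Set.Ioo 0 1 := by
  ext t
  constructor
  · rintro ⟨u, hu, rfl⟩
    have hu' : (0:ℝ) < u := hu
    have h1 : 1 < Real.cosh (π * u) := Real.one_lt_cosh.2 (by positivity)
    exact ⟨inv_pos.2 (Real.cosh_pos _), inv_lt_one_of_one_lt₀ h1⟩
  · rintro ⟨ht0, ht1⟩
    have h1t : 1 < t⁻¹ := one_lt_inv₀ ht0 |>.2 ht1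
    set M := Real.log (2 * t⁻¹) with hM
    have hM0 : 0 < M := Real.log_pos (by nlinarith)
    have hcM : t⁻¹ < Real.cosh M := by
      have he : Real.exp M = 2 * t⁻¹ := Real.exp_log (by positivity)
      have := Real.cosh_eq M
      nlinarith [Real.exp_pos (-M)]
    have := intermediate_value_Ioo (le_of_lt hM0) Real.continuous_cosh.continuousOn
      (a := 0) (b := M)
    rw [Real.cosh_zero] at this
    obtain ⟨x, hx, hcx⟩ := this ⟨h1t, hcM⟩
    have hx0 : 0 < x := hx.1
    refine ⟨x / π, Set.mem_Ioi.2 (by positivity), ?_⟩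
    show (Real.cosh (π * (x / π)))⁻¹ = t
    rw [mul_div_cancel₀ _ (ne_of_gt Real.pi_pos), hcx, inv_inv]

lemma sech_injOn : Set.InjOn (fun u : ℝ => (Real.cosh (π * u))⁻¹) (Set.Ioi 0) := by
  intro a ha b hb h
  simp only [inv_inj] at h
  have ha' : (0:ℝ) < a := ha
  have hb' : (0:ℝ) < b := hb
  have := Real.cosh_strictMonoOn.injOn
    (Set.mem_Ici.2 (by positivity : (0:ℝ) ≤ π * a)) (Set.mem_Ici.2 (by positivity)) h
  have hpi := Real.pi_pos.ne'
  exact mul_left_cancel₀ hpi this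


lemma integral_sech_pow (m : ℕ) :
    ∫ u in Set.Ioi (0:ℝ), (Real.cosh (π * u))⁻¹ ^ (m + 1) =
      Beta (((m : ℝ) + 1) / 2) (1 / 2) / (2 * π) := by
  set A : ℝ := ((m : ℝ) + 1) / 2 - 1 with hA
  set B : ℝ := (1:ℝ) / 2 - 1 with hB
  have h1 : Beta (((m : ℝ) + 1) / 2) (1 / 2)
      = ∫ w in Set.Ioo (0:ℝ) 1, w ^ A * (1 - w) ^ B := by
    rw [Beta, intervalIntegral.integral_of_le zero_le_one, integral_Ioc_eq_integral_Ioo]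
  set G : ℝ → ℝ := fun t => |2 * t| • (((t ^ 2) ^ A) * ((1 - t ^ 2) ^ B)) with hG
  have h2 : ∫ w in Set.Ioo (0:ℝ) 1, w ^ A * (1 - w) ^ B = ∫ t in Set.Ioo (0:ℝ) 1, G t := by
    conv_lhs => rw [← sq_image]
    exact integral_image_eq_integral_abs_deriv_smul measurableSet_Ioo
      (fun x _ => by simpa using (hasDerivAt_pow 2 x).hasDerivWithinAt)
      (((pow_left_strictMonoOn₀ two_ne_zero).injOn).mono (fun x hx => le_of_lt hx.1))
      (fun w => w ^ A * (1 - w) ^ B)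
  have h3 : ∫ t in Set.Ioo (0:ℝ) 1, G t
      = ∫ u in Set.Ioi (0:ℝ), |(-(Real.sinh (π * u) * (π * 1))) / (Real.cosh (π * u)) ^ 2| •
          G ((Real.cosh (π * u))⁻¹) := by
    conv_lhs => rw [← sech_image]
    refine integral_image_eq_integral_abs_deriv_smul measurableSet_Ioi
      (fun x _ => ?_) sech_injOn G
    exact (((Real.hasDerivAt_cosh (π * x)).comp x
      ((hasDerivAt_id x).const_mul π)).inv (Real.cosh_pos _).ne').hasDerivWithinAt
  have h4 : ∫ u in Set.Ioi (0:ℝ), |(-(Real.sinh (π * u) * (π * 1))) / (Real.cosh (π * u)) ^ 2| •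
          G ((Real.cosh (π * u))⁻¹)
      = ∫ u in Set.Ioi (0:ℝ), 2 * π * (Real.cosh (π * u))⁻¹ ^ (m + 1) := by
    apply setIntegral_congr_fun measurableSet_Ioi
    intro u hu
    have hu' : (0:ℝ) < u := hu
    set c := Real.cosh (π * u) with hc
    set s := Real.sinh (π * u) with hs
    have hcpos : 0 < c := Real.cosh_pos _
    have hspos : 0 < s := Real.sinh_pos_iff.2 (by positivity)
    have habs : |(-(s * (π * 1))) / c ^ 2| = π * s / c ^ 2 := by
      rw [abs_div, abs_neg, abs_of_pos (by positivity), abs_of_pos (by positivity)]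
      ring
    have h1c : (1:ℝ) - (c⁻¹) ^ 2 = (s / c) ^ 2 := by
      have hsq : s ^ 2 = c ^ 2 - 1 := by
        have := Real.cosh_sq_sub_sinh_sq (π * u); linarith
      field_simp
      linarith
    have e1 : ((c⁻¹ : ℝ) ^ 2) ^ A = (c⁻¹) ^ ((m:ℝ) - 1) := by
      rw [← Real.rpow_natCast c⁻¹ 2, ← Real.rpow_mul (by positivity)]
      congr 1
      rw [hA]; push_cast; ring
    have e2 : ((1:ℝ) - (c⁻¹) ^ 2) ^ B = c / s := by
      rw [h1c, ← Real.rpow_natCast (s/c) 2, ← Real.rpow_mul (by positivity)]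
      rw [show (2:ℕ) * B = -1 by rw [hB]; push_cast; ring]
      rw [Real.rpow_neg_one, inv_div]
    have e3 : (c⁻¹ : ℝ) ^ ((m:ℝ) - 1) = c⁻¹ ^ m / c⁻¹ := by
      rw [Real.rpow_sub (by positivity), Real.rpow_one, Real.rpow_natCast]
    show |(-(s * (π * 1))) / c ^ 2| • G c⁻¹ = 2 * π * c⁻¹ ^ (m + 1)
    rw [hG]
    simp only [smul_eq_mul]
    rw [habs, e1, e2, e3, abs_of_pos (by positivity : (0:ℝ) < 2 * c⁻¹)]
    field_simp
    ring_nf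
    simp [hcpos.ne']
  have h5 : ∫ u in Set.Ioi (0:ℝ), 2 * π * (Real.cosh (π * u))⁻¹ ^ (m + 1)
      = 2 * π * ∫ u in Set.Ioi (0:ℝ), (Real.cosh (π * u))⁻¹ ^ (m + 1) :=
    integral_const_mul _ _
  have hpi : (0:ℝ) < π := Real.pi_pos
  rw [h1, h2, h3, h4, h5]
  field_simp


end Aux
open Set in
theorem log_sech_integral (v : ℂ) (hv : ‖v‖ < 1) :
    (1 / (π : ℂ)) * (∫ u in Set.Ioi (0 : ℝ),
        Complex.log (1 - v * (1 / (Real.cosh (π * u) : ℂ)))) =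
      -∑' m : ℕ, v ^ (m + 1) * (Beta (((m : ℝ) + 1) / 2) (1 / 2) : ℂ) /
        (2 * (π : ℂ) ^ 2 * ((m : ℂ) + 1)) := by
  have hpi : (0:ℝ) < π := Real.pi_pos
  set S : ℝ → ℝ := fun u => (Real.cosh (π * u))⁻¹ with hSdef
  have hS0 : ∀ u, 0 ≤ S u := fun u => inv_nonneg.2 (Real.cosh_pos _).le
  have hS1 : ∀ u, S u ≤ 1 := fun u => inv_le_one_of_one_le₀ (Real.one_le_cosh _)
  have hSexp : ∀ u, S u ≤ 2 * Real.exp (-π * u) := by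
    intro u
    have h1 : Real.exp (π * u) / 2 ≤ Real.cosh (π * u) := by
      rw [Real.cosh_eq]; nlinarith [Real.exp_pos (-(π * u))]
    have h2 : (0:ℝ) < Real.exp (π * u) / 2 := by positivity
    calc S u ≤ (Real.exp (π * u) / 2)⁻¹ := inv_anti₀ h2 h1
      _ = 2 * Real.exp (-π * u) := by
          rw [neg_mul, Real.exp_neg]; field_simp
  have hcont : Continuous S :=
    (Real.continuous_cosh.comp (continuous_const.mul continuous_id)).inv₀
      (fun x => (Real.cosh_pos _).ne')
  have hmajor : IntegrableOn (fun u : ℝ => 2 * Real.exp (-π * u)) (Set.Ioi 0) :=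
    (exp_neg_integrableOn_Ioi 0 hpi).const_mul 2
  have hSpow_le : ∀ (m : ℕ) (u : ℝ), S u ^ (m + 1) ≤ 2 * Real.exp (-π * u) := by
    intro m u
    calc S u ^ (m + 1) ≤ S u ^ 1 :=
          pow_le_pow_of_le_one (hS0 u) (hS1 u) (Nat.one_le_iff_ne_zero.2 (Nat.succ_ne_zero m))
      _ = S u := pow_one _
      _ ≤ 2 * Real.exp (-π * u) := hSexp u
  have hSint : ∀ m : ℕ, IntegrableOn (fun u => S u ^ (m + 1)) (Set.Ioi 0) := by
    intro m
    refine Integrable.mono hmajor ((hcont.pow _).aestronglyMeasurable) ?_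
    filter_upwards with u
    rw [Real.norm_eq_abs, _root_.abs_of_nonneg (pow_nonneg (hS0 u) _), Real.norm_eq_abs,
      _root_.abs_of_nonneg (by positivity)]
    exact hSpow_le _ _
  set F : ℕ → ℝ → ℂ := fun m u => (v * (S u : ℂ)) ^ (m + 1) / ((m : ℂ) + 1) with hF
  have hFeq : ∀ m : ℕ, F m = fun u => (v ^ (m+1) / ((m:ℂ)+1)) * ((S u ^ (m+1) : ℝ) : ℂ) := by
    intro m; funext u; rw [hF]; push_cast; ring
  have hz : ∀ u, ‖v * (S u : ℂ)‖ < 1 := by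
    intro u
    rw [norm_mul, Complex.norm_real, Real.norm_eq_abs, _root_.abs_of_nonneg (hS0 u)]
    calc ‖v‖ * S u ≤ ‖v‖ * 1 := mul_le_mul_of_nonneg_left (hS1 u) (norm_nonneg v)
      _ < 1 := by rwa [mul_one]
  have hFsum : ∀ u, HasSum (fun m => F m u) (-(Complex.log (1 - v * (S u : ℂ)))) := by
    intro u
    have h := Complex.hasSum_taylorSeries_neg_log (hz u)
    have h2 := (hasSum_nat_add_iff' (f := fun n : ℕ => (v * (S u : ℂ)) ^ n / n) 1).mpr h
    simp only [Finset.range_one, Finset.sum_singleton, Nat.cast_zero, div_zero, sub_zero] at h2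
    convert h2 using 2 with m
    · rfl
    push_cast
    ring
  have hFint : ∀ m : ℕ, IntegrableOn (F m) (Set.Ioi 0) := by
    intro m
    rw [hFeq m]
    exact ((hSint m).ofReal.const_mul _)
  have hnorm : ∀ (m : ℕ) (u : ℝ), ‖F m u‖ ≤ ‖v‖ ^ (m+1) * S u ^ (m+1) := by
    intro m u
    have h1 : (1:ℝ) ≤ ‖((m:ℂ)+1)‖ := by
      rw [show ((m:ℂ)+1) = ((m+1 : ℕ) : ℂ) by push_cast; ring, Complex.norm_natCast]
      exact_mod_cast Nat.one_le_iff_ne_zero.2 (Nat.succ_ne_zero m)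
    have h3 : ‖(v * (S u : ℂ)) ^ (m+1)‖ = ‖v‖ ^ (m+1) * S u ^ (m+1) := by
      rw [norm_pow, norm_mul, Complex.norm_real, Real.norm_eq_abs, _root_.abs_of_nonneg (hS0 u), mul_pow]
    show ‖(v * (S u : ℂ)) ^ (m+1) / ((m:ℂ)+1)‖ ≤ ‖v‖ ^ (m+1) * S u ^ (m+1)
    rw [norm_div]
    calc ‖(v * (S u : ℂ)) ^ (m+1)‖ / ‖((m:ℂ)+1)‖ ≤ ‖(v * (S u : ℂ)) ^ (m+1)‖ :=
          div_le_self (norm_nonneg _) h1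
      _ = ‖v‖ ^ (m+1) * S u ^ (m+1) := h3
  have hsummable : Summable (fun m => ∫ u in Set.Ioi (0:ℝ), ‖F m u‖) := by
    set C : ℝ := ∫ u in Set.Ioi (0:ℝ), 2 * Real.exp (-π * u) with hC
    have hle : ∀ m : ℕ, (∫ u in Set.Ioi (0:ℝ), ‖F m u‖) ≤ ‖v‖ ^ (m+1) * C := by
      intro m
      rw [hC, ← integral_const_mul]
      apply integral_mono ((hFint m).norm) (hmajor.const_mul _)
      intro u
      calc ‖F m u‖ ≤ ‖v‖ ^ (m+1) * S u ^ (m+1) := hnorm m u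
        _ ≤ ‖v‖ ^ (m+1) * (2 * Real.exp (-π * u)) :=
            mul_le_mul_of_nonneg_left (hSpow_le m u) (by positivity)
    apply Summable.of_nonneg_of_le (fun m => integral_nonneg fun u => norm_nonneg _) hle
    have : (fun m : ℕ => ‖v‖ ^ (m+1) * C) = fun m : ℕ => ‖v‖ ^ m * (‖v‖ * C) := by
      funext m; rw [pow_succ]; ring
    rw [this]
    exact (summable_geometric_of_lt_one (norm_nonneg v) hv).mul_right _
  have hswap := MeasureTheory.integral_tsum_of_summable_integral_norm hFint hsummable
  have hlog : (∫ u in Set.Ioi (0:ℝ), Complex.log (1 - v * (1 / (Real.cosh (π * u) : ℂ))))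
      = -∑' m : ℕ, ∫ u in Set.Ioi (0:ℝ), F m u := by
    rw [hswap, ← integral_neg]
    apply integral_congr_ae
    filter_upwards with u
    rw [(hFsum u).tsum_eq, neg_neg]
    congr 2
    rw [one_div, ← Complex.ofReal_inv]
  have hint : ∀ m : ℕ, (∫ u in Set.Ioi (0:ℝ), F m u)
      = v ^ (m+1) / ((m:ℂ)+1) * ((Beta (((m:ℝ)+1)/2) (1/2) / (2 * π) : ℝ) : ℂ) := by
    intro m
    rw [hFeq m, integral_const_mul]
    congr 1
    rw [← integral_sech_pow m]
    exact integral_ofReal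
  rw [hlog, mul_neg, neg_inj]
  simp only [hint]
  rw [← tsum_mul_left]
  apply tsum_congr
  intro m
  have hm1 : ((m:ℂ)+1) ≠ 0 := Nat.cast_add_one_ne_zero m
  have hpi' : (π : ℂ) ≠ 0 := Complex.ofReal_ne_zero.2 hpi.ne'
  have hden : (2*(π:ℂ)^2*((m:ℂ)+1)) ≠ 0 :=
    mul_ne_zero (mul_ne_zero two_ne_zero (pow_ne_zero _ hpi')) hm1
  push_cast
  rw [eq_div_iff hden]
  field_simp
end

section
/- For |v| ≤ 1, ∑_{m=1}^∞ v^m B(m/2, 1/2)/(2π^2 m) = (1/(2π)) arcsin(v) + (1/(2π^2)) arcsin(v)^2, where the series converges absolutely. -/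
open Real Complex

namespace SAux

lemma ofReal_Beta {a b : ℝ} (ha : 0 < a) (hb : 0 < b) :
    (Beta a b : ℂ) = Complex.betaIntegral a b := by
  rw [Beta, Complex.betaIntegral, ← intervalIntegral.integral_ofReal]
  refine intervalIntegral.integral_congr fun x hx => ?_
  rw [Set.uIcc_of_le (by norm_num : (0:ℝ) ≤ 1)] at hx
  rw [Complex.ofReal_mul, Complex.ofReal_cpow hx.1, Complex.ofReal_cpow (by linarith [hx.2])]
  push_cast
  ring

lemma Beta_eq_Gamma {a b : ℝ} (ha : 0 < a) (hb : 0 < b) :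
    Beta a b = Real.Gamma a * Real.Gamma b / Real.Gamma (a + b) := by
  have h := Complex.Gamma_mul_Gamma_eq_betaIntegral
    (by simpa using ha : 0 < Complex.re a) (by simpa using hb : 0 < Complex.re b)
  rw [← ofReal_Beta ha hb] at h
  have hab : (0:ℝ) < a + b := by linarith
  have hG : Real.Gamma (a + b) ≠ 0 := (Real.Gamma_pos_of_pos hab).ne'
  have : ((Real.Gamma a * Real.Gamma b : ℝ) : ℂ) = ((Real.Gamma (a+b) * Beta a b : ℝ) : ℂ) := by
    push_cast
    rw [← Complex.Gamma_ofReal, ← Complex.Gamma_ofReal, ← Complex.Gamma_ofReal] at *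
    push_cast at h ⊢
    rw [h]
  have := Complex.ofReal_injective this
  field_simp
  linarith [this]

/-- The Beta coefficients in the series. -/
noncomputable def β (m : ℕ) : ℝ := Beta (((m : ℝ) + 1) / 2) (1 / 2)

lemma β_eq (m : ℕ) : β m = Real.Gamma (((m:ℝ)+1)/2) * Real.sqrt π / Real.Gamma (((m:ℝ)+1)/2 + 1/2) := by
  rw [β, Beta_eq_Gamma (by positivity) (by norm_num), Real.Gamma_one_half_eq]

lemma β_pos (m : ℕ) : 0 < β m := by
  rw [β_eq]
  have h1 : 0 < Real.Gamma (((m:ℝ)+1)/2) := Real.Gamma_pos_of_pos (by positivity)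
  have h2 : 0 < Real.Gamma (((m:ℝ)+1)/2 + 1/2) := Real.Gamma_pos_of_pos (by positivity)
  have h3 : 0 < Real.sqrt π := Real.sqrt_pos.mpr Real.pi_pos
  positivity

lemma β_zero : β 0 = π := by
  rw [β_eq]
  norm_num
  rw [Real.Gamma_one_half_eq, Real.mul_self_sqrt Real.pi_pos.le]

lemma β_one : β 1 = 2 := by
  rw [β_eq]
  norm_num
  rw [(by norm_num : (3:ℝ)/2 = 1/2 + 1), Real.Gamma_add_one (by norm_num),
    Real.Gamma_one_half_eq]
  rw [div_eq_iff (by positivity)]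
  nlinarith [Real.sq_sqrt Real.pi_pos.le, Real.sqrt_pos.mpr Real.pi_pos]

lemma β_rec (m : ℕ) : ((m:ℝ) + 2) * β (m + 2) = ((m:ℝ) + 1) * β m := by
  have e0 := β_eq m
  have e2 := β_eq (m+2)
  push_cast at e2
  rw [show ((m:ℝ)+2+1)/2 + 1/2 = (((m:ℝ)+1)/2 + 1/2) + 1 by ring,
      show ((m:ℝ)+2+1)/2 = ((m:ℝ)+1)/2 + 1 by ring,
      Real.Gamma_add_one (by positivity : ((m:ℝ)+1)/2 ≠ 0),
      Real.Gamma_add_one (by positivity : ((m:ℝ)+1)/2 + 1/2 ≠ 0)] at e2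
  rw [e0, e2]
  set x := ((m:ℝ)+1)/2 with hxdef
  have hx : x = ((m:ℝ)+1)/2 := hxdef
  have hx0 : (0:ℝ) < x := by rw [hx]; positivity
  have hxh : x + 1/2 ≠ 0 := by rw [hx]; positivity
  have hGx : Real.Gamma x ≠ 0 := (Real.Gamma_pos_of_pos hx0).ne'
  have hGh : Real.Gamma (x + 1/2) ≠ 0 := (Real.Gamma_pos_of_pos (by linarith)).ne'
  set Gx := Real.Gamma x with hGxd
  set Gh := Real.Gamma (x + 1/2) with hGhd
  set sp := Real.sqrt π with hspd
  clear_value x Gx Gh sp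
  field_simp
  linear_combination (2 * sp) * hx

lemma β_mul (m : ℕ) : β m * β (m + 1) = 2 * π / ((m:ℝ) + 1) := by
  have e0 := β_eq m
  have e1 := β_eq (m+1)
  push_cast at e1
  rw [show ((m:ℝ)+1+1)/2 + 1/2 = ((m:ℝ)+1)/2 + 1 by ring,
      show ((m:ℝ)+1+1)/2 = ((m:ℝ)+1)/2 + 1/2 by ring,
      Real.Gamma_add_one (by positivity : ((m:ℝ)+1)/2 ≠ 0)] at e1
  rw [e0, e1]
  set x := ((m:ℝ)+1)/2 with hxdef
  have hx : x = ((m:ℝ)+1)/2 := hxdef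
  have hx0 : (0:ℝ) < x := by rw [hx]; positivity
  have hsq : Real.sqrt π * Real.sqrt π = π := Real.mul_self_sqrt Real.pi_pos.le
  have hGx : Real.Gamma x ≠ 0 := (Real.Gamma_pos_of_pos hx0).ne'
  have hGh : Real.Gamma (x + 1/2) ≠ 0 := (Real.Gamma_pos_of_pos (by linarith)).ne'
  have hx' : x ≠ 0 := hx0.ne'
  have hm : ((m:ℝ)+1) ≠ 0 := by positivity
  set Gx := Real.Gamma x with hGxd
  set Gh := Real.Gamma (x + 1/2) with hGhd
  set sp := Real.sqrt π with hspd
  clear_value x Gx Gh sp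
  field_simp
  linear_combination ((m:ℝ)+1) * hsq - (2 * π) * hx

lemma β_antitone (m : ℕ) : β (m + 1) ≤ β m := by
  set x : ℝ := ((m:ℝ)+1)/2 with hxdef
  have hx : 0 < x := by positivity
  have key : Real.Gamma (x + 1/2) ^ 2 ≤ Real.Gamma x * Real.Gamma (x + 1) := by
    have hconv := Real.convexOn_log_Gamma
    have h := hconv.2 (Set.mem_Ioi.mpr hx) (Set.mem_Ioi.mpr (by linarith : (0:ℝ) < x + 1))
      (by norm_num : (0:ℝ) ≤ (1:ℝ)/2) (by norm_num : (0:ℝ) ≤ (1:ℝ)/2) (by norm_num)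
    simp only [Function.comp, smul_eq_mul] at h
    have hmid : (1:ℝ)/2 * x + 1/2 * (x+1) = x + 1/2 := by ring
    rw [hmid] at h
    have hGx : 0 < Real.Gamma x := Real.Gamma_pos_of_pos hx
    have hGx1 : 0 < Real.Gamma (x+1) := Real.Gamma_pos_of_pos (by linarith)
    have hGm : 0 < Real.Gamma (x+1/2) := Real.Gamma_pos_of_pos (by linarith)
    have := Real.exp_le_exp.mpr h
    rw [Real.exp_log hGm] at this
    calc Real.Gamma (x + 1/2) ^ 2 = Real.Gamma (x+1/2) * Real.Gamma (x+1/2) := sq (Real.Gamma (x+1/2)) ▸ by ring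
      _ ≤ (Real.exp (1/2 * Real.log (Real.Gamma x) + 1/2 * Real.log (Real.Gamma (x+1)))) ^ 2 := by
          rw [sq]
          exact mul_le_mul this this hGm.le (by positivity)
      _ = Real.Gamma x * Real.Gamma (x+1) := by
          rw [← Real.exp_nat_mul]
          push_cast
          rw [show (2:ℝ) * (1/2 * Real.log (Real.Gamma x) + 1/2 * Real.log (Real.Gamma (x+1)))
              = Real.log (Real.Gamma x) + Real.log (Real.Gamma (x+1)) by ring,
            Real.exp_add, Real.exp_log hGx, Real.exp_log hGx1]
  -- now β (m+1) ≤ β m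
  have e1 : β m = Real.Gamma x * Real.sqrt π / Real.Gamma (x + 1/2) := by rw [β_eq]
  have e2 : β (m+1) = Real.Gamma (x + 1/2) * Real.sqrt π / Real.Gamma (x + 1) := by
    rw [β_eq]
    push_cast
    rw [show ((m:ℝ)+1+1)/2 = x + 1/2 by rw [hxdef]; ring,
        show x + 1/2 + 1/2 = x + 1 by ring]
  rw [e1, e2, div_le_div_iff₀ (Real.Gamma_pos_of_pos (by linarith)) (Real.Gamma_pos_of_pos (by linarith))]
  have hs : 0 < Real.sqrt π := Real.sqrt_pos.mpr Real.pi_pos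
  nlinarith [key]

lemma β_le_pi (m : ℕ) : β m ≤ π := by
  have : ∀ n : ℕ, β n ≤ β 0 := by
    intro n
    induction n with
    | zero => exact le_refl _
    | succ k ih => exact (β_antitone k).trans ih
  calc β m ≤ β 0 := this m
    _ = π := β_zero

lemma β_sq_le (m : ℕ) : β m ^ 2 * ((m:ℝ) + 1) ≤ 4 * π := by
  cases m with
  | zero =>
    rw [β_zero]
    norm_num
    nlinarith [Real.pi_le_four, Real.pi_pos]
  | succ k =>
    have h1 : β (k+1) ^ 2 ≤ β k * β (k+1) := by
      have := β_antitone k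
      have hp := β_pos (k+1)
      nlinarith
    have h2 : β k * β (k+1) = 2 * π / ((k:ℝ)+1) := β_mul k
    have hk : (0:ℝ) < (k:ℝ) + 1 := by positivity
    push_cast
    have h3 : β (k+1) ^ 2 ≤ 2 * π / ((k:ℝ)+1) := h2 ▸ h1
    have h4 : ((k:ℝ) + 1 + 1) ≤ 2 * ((k:ℝ)+1) := by linarith [Nat.cast_nonneg (α := ℝ) k]
    calc β (k+1)^2 * ((k:ℝ)+1+1) ≤ (2*π/((k:ℝ)+1)) * (2*((k:ℝ)+1)) := by
          apply mul_le_mul h3 h4 (by positivity) (by positivity)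
      _ = 4 * π := by field_simp; ring
  
lemma β_le (m : ℕ) : β m ≤ 2 * Real.sqrt π / Real.sqrt ((m:ℝ) + 1) := by
  have h := β_sq_le m
  have hm : (0:ℝ) < (m:ℝ) + 1 := by positivity
  have hb := (β_pos m).le
  rw [le_div_iff₀ (Real.sqrt_pos.mpr hm)]
  nlinarith [Real.sq_sqrt hm.le, Real.sq_sqrt Real.pi_pos.le, Real.sqrt_nonneg ((m:ℝ)+1),
    Real.sqrt_pos.mpr Real.pi_pos, β_pos m, h]


/-! ### slit plane geometry -/

lemma sq_half_pow (u : ℂ) : (u ^ ((1:ℂ)/2)) ^ (2:ℕ) = u := by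
  rw [show ((1:ℂ)/2) = ((2:ℂ))⁻¹ by norm_num]
  exact Complex.cpow_ofNat_inv_pow u 2

lemma re_half_pow_nonneg (u : ℂ) : 0 ≤ (u ^ ((1:ℂ)/2)).re := by
  rcases eq_or_ne u 0 with rfl | hu
  · rw [Complex.zero_cpow (by norm_num : ((1:ℂ)/2) ≠ 0)]
    simp
  · rw [Complex.cpow_def_of_ne_zero hu, Complex.exp_re]
    have him : (Complex.log u * ((1:ℂ)/2)).im = u.arg / 2 := by
      simp [Complex.mul_im, Complex.log_im]
      ring
    rw [him]
    have h1 := Complex.neg_pi_lt_arg u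
    have h2 := Complex.arg_le_pi u
    have hc : 0 ≤ Real.cos (u.arg / 2) :=
      Real.cos_nonneg_of_mem_Icc ⟨by linarith, by linarith⟩
    positivity

lemma w_mem_slitPlane (z : ℂ) :
    (Complex.I * z + (1 - z ^ 2) ^ ((1:ℂ)/2)) ∈ Complex.slitPlane := by
  set s : ℂ := (1 - z ^ 2) ^ ((1:ℂ)/2) with hs
  set w : ℂ := Complex.I * z + s with hwdef
  have h1 : s ^ (2:ℕ) = 1 - z ^ 2 := sq_half_pow _
  have h2 : w * (s - Complex.I * z) = 1 := by
    rw [hwdef]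
    linear_combination h1 - z^2 * Complex.I_sq
  have hw0 : w ≠ 0 := by
    intro h
    rw [h, zero_mul] at h2
    exact zero_ne_one h2
  rw [Complex.mem_slitPlane_iff]
  by_contra hcon
  push_neg at hcon
  obtain ⟨hre, him⟩ := hcon
  have hwx : w = ((w.re : ℝ) : ℂ) := Complex.ext rfl (by simp [him])
  have hx0 : w.re ≠ 0 := by
    intro h
    apply hw0
    rw [hwx, h, Complex.ofReal_zero]
  have hxneg : w.re < 0 := lt_of_le_of_ne hre hx0
  -- s = (w + w⁻¹)/2
  have hinv : s - Complex.I * z = w⁻¹ := by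
    field_simp [hw0] at h2 ⊢
    linear_combination h2
  have hs2 : s = (w + w⁻¹) / 2 := by
    rw [← hinv, hwdef]
    ring
  have hsre : s.re = (w.re + (w.re)⁻¹) / 2 := by
    rw [hs2]
    rw [hwx, ← Complex.ofReal_inv, ← Complex.ofReal_add]
    simp
  have hx : (w.re)⁻¹ < 0 := inv_lt_zero.mpr hxneg
  have : s.re < 0 := by rw [hsre]; linarith
  exact absurd (re_half_pow_nonneg (1 - z^2)) (by rw [← hs]; linarith)

lemma one_sub_sq_mem {z : ℂ} (hz : ‖z‖ < 1) : (1 - z ^ 2) ∈ Complex.slitPlane := by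
  rw [Complex.mem_slitPlane_iff]
  left
  have : (z^2).re ≤ ‖z^2‖ := by
    calc (z^2).re ≤ |(z^2).re| := le_abs_self _
      _ ≤ ‖z^2‖ := Complex.abs_re_le_norm _
      _ = ‖z^2‖ := rfl
  have h2 : ‖z^2‖ < 1 := by
    rw [norm_pow]
    calc ‖z‖^2 ≤ ‖z‖ * 1 := by nlinarith [norm_nonneg z]
      _ < 1 := by linarith
  simp only [Complex.sub_re, Complex.one_re]
  linarith

noncomputable def ss (z : ℂ) : ℂ := (1 - z ^ 2) ^ ((1:ℂ)/2)

lemma ss_ne_zero {z : ℂ} (hz : ‖z‖ < 1) : ss z ≠ 0 := by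
  intro h
  have h1 : (ss z) ^ (2:ℕ) = 1 - z ^ 2 := sq_half_pow _
  rw [h] at h1
  have : (1 - z^2).re = 0 := by rw [← h1]; simp
  have h2 := one_sub_sq_mem hz
  rw [Complex.mem_slitPlane_iff] at h2
  rcases h2 with h2 | h2
  · linarith
  · apply h2
    rw [← h1]; simp

lemma hasDerivAt_ss {z : ℂ} (hz : ‖z‖ < 1) :
    HasDerivAt ss (-z / ss z) z := by
  have h1 : HasDerivAt (fun z : ℂ => 1 - z ^ 2) (-(2 * z)) z := by
    simpa using ((hasDerivAt_pow 2 z).const_sub 1)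
  have h2 := HasDerivAt.cpow_const (c := (1:ℂ)/2) h1 (one_sub_sq_mem hz)
  convert h2 using 1
  · rfl
  rw [show ((1:ℂ)/2 - 1) = -((1:ℂ)/2) by norm_num, Complex.cpow_neg]
  rw [ss, div_eq_mul_inv]
  ring

lemma carcsin_zero : carcsin 0 = 0 := by
  rw [carcsin]
  norm_num

lemma hasDerivAt_carcsin {z : ℂ} (hz : ‖z‖ < 1) :
    HasDerivAt carcsin (ss z)⁻¹ z := by
  have hw := w_mem_slitPlane z
  have hlin : HasDerivAt (fun z : ℂ => Complex.I * z + ss z)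
      (Complex.I + -z / ss z) z := by
    exact (((hasDerivAt_id z).const_mul Complex.I).add (hasDerivAt_ss hz)).congr_deriv (by simp)
  have hlog := (hlin.clog hw).const_mul (-Complex.I)
  have heq : ∀ y : ℂ, -Complex.I * Complex.log (Complex.I * y + ss y) = carcsin y := by
    intro y; rw [carcsin, ss]
  have h2 : HasDerivAt carcsin
      (-Complex.I * ((Complex.I + -z / ss z) / (Complex.I * z + ss z))) z := by
    refine HasDerivAt.congr_of_eventuallyEq hlog ?_
    filter_upwards with y
    rw [heq y]
  convert h2 using 1
  have hs0 : ss z ≠ 0 := ss_ne_zero hz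
  have hw0 : (Complex.I * z + ss z) ≠ 0 := by
    have := Complex.slitPlane_ne_zero hw
    rw [ss]; exact this
  field_simp
  linear_combination (ss z) * Complex.I_sq

/-! ### series -/

noncomputable def Fs (v : ℂ) : ℂ :=
  ∑' m : ℕ, v ^ (m + 1) * ((β m : ℝ) : ℂ) / (2 * (π : ℂ) ^ 2 * ((m : ℂ) + 1))

noncomputable def Ps (z : ℂ) : ℂ := ∑' m : ℕ, ((β m : ℝ) : ℂ) * z ^ m

noncomputable def Qs (z : ℂ) : ℂ := ∑' m : ℕ, (((m : ℂ) + 1) * ((β (m+1) : ℝ) : ℂ)) * z ^ m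

lemma norm_denom (m : ℕ) : ‖2 * (π : ℂ) ^ 2 * ((m : ℂ) + 1)‖ = 2 * π ^ 2 * ((m:ℝ) + 1) := by
  have h1 : ((m : ℂ) + 1) = (((m : ℝ) + 1 : ℝ) : ℂ) := by push_cast; ring
  rw [h1, norm_mul, norm_mul, norm_pow, Complex.norm_real, Complex.norm_real, Real.norm_eq_abs,
    Real.norm_eq_abs, _root_.abs_of_nonneg Real.pi_pos.le,
    _root_.abs_of_nonneg (by positivity : (0:ℝ) ≤ (m:ℝ)+1)]
  norm_num

lemma norm_term {v : ℂ} (m : ℕ) :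
    ‖v ^ (m + 1) * ((β m : ℝ) : ℂ) / (2 * (π : ℂ) ^ 2 * ((m : ℂ) + 1))‖
      = ‖v‖ ^ (m+1) * β m / (2 * π ^ 2 * ((m:ℝ) + 1)) := by
  rw [norm_div, norm_mul, norm_pow, norm_denom, Complex.norm_real,
    Real.norm_eq_abs, _root_.abs_of_nonneg (β_pos m).le]

/-- summable majorant -/
lemma summable_u : Summable (fun m : ℕ => (((m:ℝ) + 1) ^ ((3:ℝ)/2))⁻¹) := by
  have h : Summable (fun n : ℕ => ((n:ℝ) ^ ((3:ℝ)/2))⁻¹) :=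
    Real.summable_nat_rpow_inv.mpr (by norm_num)
  have h2 := (summable_nat_add_iff 1).mpr h
  refine h2.congr fun n => ?_
  push_cast
  norm_num

lemma rpow_32 (m : ℕ) : ((m:ℝ) + 1) ^ ((3:ℝ)/2) = ((m:ℝ)+1) * Real.sqrt ((m:ℝ)+1) := by
  have hp : (0:ℝ) < (m:ℝ) + 1 := by positivity
  rw [Real.sqrt_eq_rpow, show ((3:ℝ)/2) = 1 + 1/2 by norm_num, Real.rpow_add hp, Real.rpow_one]

lemma term_le {v : ℂ} (hv : ‖v‖ ≤ 1) (m : ℕ) :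
    ‖v ^ (m + 1) * ((β m : ℝ) : ℂ) / (2 * (π : ℂ) ^ 2 * ((m : ℂ) + 1))‖
      ≤ (Real.sqrt π / π ^ 2) * (((m:ℝ) + 1) ^ ((3:ℝ)/2))⁻¹ := by
  rw [norm_term, rpow_32]
  have hm : (0:ℝ) < (m:ℝ) + 1 := by positivity
  have hsm : (0:ℝ) < Real.sqrt ((m:ℝ)+1) := Real.sqrt_pos.mpr hm
  have h1 : ‖v‖ ^ (m+1) ≤ 1 := pow_le_one₀ (norm_nonneg v) hv
  have h2 : ‖v‖ ^ (m+1) * β m ≤ β m := by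
    nlinarith [β_pos m, pow_nonneg (norm_nonneg v) (m+1)]
  have hβ := β_le m
  have hπ := Real.pi_pos
  calc ‖v‖ ^ (m+1) * β m / (2 * π ^ 2 * ((m:ℝ) + 1))
      ≤ β m / (2 * π ^ 2 * ((m:ℝ) + 1)) := by
        apply div_le_div_of_nonneg_right h2 (by positivity) |>.trans_eq rfl
    _ ≤ (2 * Real.sqrt π / Real.sqrt ((m:ℝ)+1)) / (2 * π ^ 2 * ((m:ℝ) + 1)) := by
        apply div_le_div_of_nonneg_right hβ (by positivity) |>.trans_eq rfl
    _ = (Real.sqrt π / π ^ 2) * (((m:ℝ)+1) * Real.sqrt ((m:ℝ)+1))⁻¹ := by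
        field_simp

lemma summable_norm_term {v : ℂ} (hv : ‖v‖ ≤ 1) :
    Summable (fun m : ℕ =>
      ‖v ^ (m + 1) * ((β m : ℝ) : ℂ) / (2 * (π : ℂ) ^ 2 * ((m : ℂ) + 1))‖) :=
  Summable.of_nonneg_of_le (fun _ => norm_nonneg _) (term_le hv) (summable_u.mul_left _)

lemma summable_term {v : ℂ} (hv : ‖v‖ ≤ 1) :
    Summable (fun m : ℕ =>
      v ^ (m + 1) * ((β m : ℝ) : ℂ) / (2 * (π : ℂ) ^ 2 * ((m : ℂ) + 1))) :=
  (summable_norm_term hv).of_norm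

/-- generic geometric comparison -/
lemma summable_poly_geom {z : ℂ} (hz : ‖z‖ < 1) (f : ℕ → ℂ) (C : ℝ)
    (h : ∀ m, ‖f m‖ ≤ C * (((m:ℝ) + 1) * ‖z‖ ^ m)) : Summable f := by
  refine Summable.of_norm_bounded ?_ h
  have h1 : Summable (fun m : ℕ => (m:ℝ) ^ 1 * ‖z‖ ^ m) :=
    summable_pow_mul_geometric_of_norm_lt_one 1
      (by rwa [Real.norm_eq_abs, _root_.abs_of_nonneg (norm_nonneg z)])
  have h2 : Summable (fun m : ℕ => ‖z‖ ^ m) := summable_geometric_of_lt_one (norm_nonneg z) hz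
  have h3 : Summable (fun m : ℕ => ((m:ℝ) + 1) * ‖z‖ ^ m) := by
    refine ((h1.add h2).congr fun m => ?_)
    push_cast
    ring
  exact h3.mul_left C


lemma hasDerivAt_Fs {z : ℂ} (hz : ‖z‖ < 1) :
    HasDerivAt Fs (Ps z / (2 * (π:ℂ)^2)) z := by
  set r : ℝ := (1 + ‖z‖) / 2 with hrdef
  have hr0 : 0 ≤ r := by positivity
  have hr1 : r < 1 := by rw [hrdef]; linarith
  have hzr : ‖z‖ < r := by rw [hrdef]; linarith
  have hπ : (0:ℝ) < π := Real.pi_pos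
  have key : HasDerivAt Fs
      (∑' m : ℕ, (((m+1 : ℕ) : ℂ) * z ^ m * ((β m : ℝ) : ℂ)) / (2 * (π:ℂ)^2 * ((m:ℂ)+1))) z := by
    refine hasDerivAt_tsum_of_isPreconnected (y₀ := (0:ℂ))
      (u := fun m : ℕ => π * r ^ m / (2 * π^2))
      (g := fun m y => y ^ (m + 1) * ((β m : ℝ) : ℂ) / (2 * (π : ℂ) ^ 2 * ((m : ℂ) + 1)))
      (g' := fun m y => (((m+1 : ℕ) : ℂ) * y ^ m * ((β m : ℝ) : ℂ)) / (2 * (π:ℂ)^2 * ((m:ℂ)+1)))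
      ?_ Metric.isOpen_ball ((convex_ball (0:ℂ) r).isPreconnected) ?_ ?_ ?_ ?_ ?_
    · exact ((summable_geometric_of_lt_one hr0 hr1).mul_left (π / (2 * π ^ 2))).congr (fun m => by ring)
    · intro m y hy
      have h1 : HasDerivAt (fun y : ℂ => y ^ (m+1) * ((β m : ℝ) : ℂ))
          (((m+1 : ℕ) : ℂ) * y ^ m * ((β m : ℝ) : ℂ)) y := by
        simpa using (hasDerivAt_pow (m+1) y).mul_const ((β m : ℝ) : ℂ)
      exact h1.div_const _
    · intro m y hy
      rw [Metric.mem_ball, dist_zero_right] at hy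
      rw [norm_div, norm_mul, norm_mul, norm_pow, norm_denom, Complex.norm_real,
        Real.norm_eq_abs, _root_.abs_of_nonneg (β_pos m).le]
      have hn : ‖((m+1 : ℕ) : ℂ)‖ = (m:ℝ) + 1 := by
        rw [Complex.norm_natCast]; push_cast; ring
      rw [hn]
      have h1 : ‖y‖ ^ m ≤ r ^ m := pow_le_pow_left₀ (norm_nonneg y) hy.le m
      have h2 : ((m:ℝ)+1) * ‖y‖^m * β m ≤ ((m:ℝ)+1) * (π * r^m) := by
        have := β_le_pi m
        have hb := (β_pos m).le
        have h3 : ‖y‖ ^ m * β m ≤ r ^ m * π :=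
          mul_le_mul h1 this hb (by positivity)
        nlinarith [h3, (by positivity : (0:ℝ) ≤ (m:ℝ)+1)]
      rw [div_le_div_iff₀ (by positivity) (by positivity)]
      calc ((m:ℝ)+1) * ‖y‖^m * β m * (2 * π^2)
          ≤ (((m:ℝ)+1) * (π * r^m)) * (2*π^2) := by
            apply mul_le_mul_of_nonneg_right h2 (by positivity)
        _ = π * r^m * (2 * π^2 * ((m:ℝ)+1)) := by ring
    · exact Metric.mem_ball_self (by positivity)
    · refine summable_zero.congr fun m => ?_
      simp [zero_pow (Nat.succ_ne_zero m)]
    · exact mem_ball_zero_iff.mpr hzr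
  convert key using 1
  rw [Ps, div_eq_mul_inv, ← tsum_mul_right]
  refine tsum_congr fun m => ?_
  have hm : ((m:ℂ) + 1) ≠ 0 := by
    exact_mod_cast Nat.cast_add_one_ne_zero (R := ℂ) m
  have hπc : ((π:ℝ) : ℂ) ≠ 0 := Complex.ofReal_ne_zero.mpr hπ.ne'
  field_simp
  push_cast
  ring

lemma hasDerivAt_Ps {z : ℂ} (hz : ‖z‖ < 1) :
    HasDerivAt Ps (Qs z) z := by
  set r : ℝ := (1 + ‖z‖) / 2 with hrdef
  have hr0 : 0 ≤ r := by positivity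
  have hr1 : r < 1 := by rw [hrdef]; linarith
  have hzr : ‖z‖ < r := by rw [hrdef]; linarith
  have hπ : (0:ℝ) < π := Real.pi_pos
  have hrn : ‖r‖ < 1 := by rwa [Real.norm_eq_abs, _root_.abs_of_nonneg hr0]
  have husum : Summable (fun m : ℕ => π * ((m:ℝ) * r ^ (m-1))) := by
    refine Summable.mul_left π ?_
    refine (summable_nat_add_iff 1).mp ?_
    have h1 : Summable (fun m : ℕ => (m:ℝ) ^ 1 * r ^ m) :=
      summable_pow_mul_geometric_of_norm_lt_one 1 hrn
    have h2 : Summable (fun m : ℕ => r ^ m) := summable_geometric_of_lt_one hr0 hr1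
    refine (h1.add h2).congr fun m => ?_
    push_cast
    simp [Nat.add_sub_cancel]
    ring
  have hbound : ∀ (m : ℕ) (y : ℂ), y ∈ Metric.ball (0:ℂ) r →
      ‖((β m : ℝ) : ℂ) * (((m:ℕ):ℂ) * y ^ (m-1))‖ ≤ π * ((m:ℝ) * r ^ (m-1)) := by
    intro m y hy
    rw [Metric.mem_ball, dist_zero_right] at hy
    rw [norm_mul, norm_mul, norm_pow, Complex.norm_natCast, Complex.norm_real,
      Real.norm_eq_abs, _root_.abs_of_nonneg (β_pos m).le]
    have h1 : ‖y‖ ^ (m-1) ≤ r ^ (m-1) := pow_le_pow_left₀ (norm_nonneg y) hy.le _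
    have h2 := β_le_pi m
    have hb := (β_pos m).le
    have hmn : (0:ℝ) ≤ (m:ℝ) := Nat.cast_nonneg m
    exact mul_le_mul h2 (mul_le_mul_of_nonneg_left h1 hmn)
      (by positivity) hπ.le
  have key : HasDerivAt Ps (∑' m : ℕ, ((β m : ℝ) : ℂ) * (((m:ℕ):ℂ) * z ^ (m-1))) z := by
    refine hasDerivAt_tsum_of_isPreconnected husum Metric.isOpen_ball
      ((convex_ball (0:ℂ) r).isPreconnected)
      (g := fun m y => ((β m : ℝ) : ℂ) * y ^ m) ?_ hbound
      (Metric.mem_ball_self (by positivity)) ?_ (mem_ball_zero_iff.mpr hzr)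
    · intro m y hy
      exact (hasDerivAt_pow m y).const_mul _
    · refine summable_of_ne_finset_zero (s := {0}) fun m hm => ?_
      have : m ≠ 0 := by simpa using hm
      simp [zero_pow this]
  convert key using 1
  have hsum2 : Summable (fun m : ℕ => ((β m : ℝ) : ℂ) * (((m:ℕ):ℂ) * z ^ (m-1))) := by
    refine Summable.of_norm_bounded ?_ (fun m => hbound m z (mem_ball_zero_iff.mpr hzr))
    exact husum
  rw [Qs, Summable.tsum_eq_zero_add hsum2]
  simp only [Nat.cast_zero, zero_mul, mul_zero, zero_add]
  refine tsum_congr fun m => ?_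
  push_cast [Nat.add_sub_cancel]
  ring

/-! ### the ODE -/

lemma ode {z : ℂ} (hz : ‖z‖ < 1) : (1 - z^2) * Qs z - z * Ps z = 2 := by
  have hπ : (0:ℝ) < π := Real.pi_pos
  have hz1 : ‖z‖ ^ 1 ≤ 1 := pow_le_one₀ (norm_nonneg z) hz.le
  -- summability facts
  have hQ : Summable (fun m : ℕ => (((m : ℂ) + 1) * ((β (m+1) : ℝ) : ℂ)) * z ^ m) := by
    refine summable_poly_geom hz _ π fun m => ?_
    rw [norm_mul, norm_mul, norm_pow, Complex.norm_real, Real.norm_eq_abs,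
      _root_.abs_of_nonneg (β_pos (m+1)).le]
    have h1 : ‖(m : ℂ) + 1‖ = (m:ℝ) + 1 := by
      rw [show ((m:ℂ)+1) = (((m+1 : ℕ)):ℂ) by push_cast; ring, Complex.norm_natCast]
      push_cast; ring
    rw [h1]
    have h2 := β_le_pi (m+1)
    have hb := (β_pos (m+1)).le
    have hpow := pow_nonneg (norm_nonneg z) m
    calc ((m:ℝ)+1) * β (m+1) * ‖z‖^m ≤ ((m:ℝ)+1) * π * ‖z‖^m := by
          apply mul_le_mul_of_nonneg_right
            (mul_le_mul_of_nonneg_left h2 (by positivity)) hpow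
      _ = π * (((m:ℝ)+1) * ‖z‖^m) := by ring
  have hb' : Summable (fun m : ℕ => (m : ℂ) * ((β m : ℝ) : ℂ) * z ^ (m+1)) := by
    refine summable_poly_geom hz _ π fun m => ?_
    rw [norm_mul, norm_mul, norm_pow, Complex.norm_real, Real.norm_eq_abs,
      _root_.abs_of_nonneg (β_pos m).le, Complex.norm_natCast]
    have h2 := β_le_pi m
    have hb := (β_pos m).le
    have hpow := pow_nonneg (norm_nonneg z) m
    have hmn : (0:ℝ) ≤ (m:ℝ) := Nat.cast_nonneg m
    rw [pow_succ]
    calc (m:ℝ) * β m * (‖z‖^m * ‖z‖) ≤ (m:ℝ) * β m * (‖z‖^m * 1) := by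
          apply mul_le_mul_of_nonneg_left
            (mul_le_mul_of_nonneg_left hz.le hpow) (by positivity)
      _ = (m:ℝ) * β m * ‖z‖^m := by ring
      _ ≤ (((m:ℝ)+1) * π) * ‖z‖^m := by
          apply mul_le_mul_of_nonneg_right ?_ hpow
          nlinarith [mul_nonneg hmn (sub_nonneg.mpr h2)]
      _ = π * (((m:ℝ)+1) * ‖z‖^m) := by ring
  have hc' : Summable (fun m : ℕ => ((β m : ℝ) : ℂ) * z ^ (m+1)) := by
    refine summable_poly_geom hz _ π fun m => ?_
    rw [norm_mul, norm_pow, Complex.norm_real, Real.norm_eq_abs,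
      _root_.abs_of_nonneg (β_pos m).le]
    have h2 := β_le_pi m
    have hb := (β_pos m).le
    have hpow := pow_nonneg (norm_nonneg z) m
    rw [pow_succ]
    calc β m * (‖z‖^m * ‖z‖) ≤ β m * (‖z‖^m * 1) := by
          apply mul_le_mul_of_nonneg_left
            (mul_le_mul_of_nonneg_left hz.le hpow) (β_pos m).le
      _ = β m * ‖z‖^m := by ring
      _ ≤ (((m:ℝ)+1) * π) * ‖z‖^m := by
          apply mul_le_mul_of_nonneg_right ?_ hpow
          nlinarith [Nat.cast_nonneg (α := ℝ) m, Real.pi_pos]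
      _ = π * (((m:ℝ)+1) * ‖z‖^m) := by ring
  -- step 1 : Qs z = 2 + ∑' m, ((m+2) β(m+2)) z^(m+1)
  have e1 : Qs z = 2 + ∑' m : ℕ, (((m : ℂ) + 1) * ((β m : ℝ) : ℂ)) * z ^ (m+1) := by
    have hβ1 : ((β 1 : ℝ) : ℂ) = 2 := by rw [β_one]; norm_num
    rw [Qs, Summable.tsum_eq_zero_add hQ]
    simp only [Nat.cast_zero, zero_add, one_mul, pow_zero, mul_one, hβ1]
    congr 1
    refine tsum_congr fun m => ?_
    have hrec : ((m:ℂ) + 2) * ((β (m+1+1) : ℝ) : ℂ) = ((m:ℂ) + 1) * ((β m : ℝ) : ℂ) := by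
      have h := β_rec m
      have h2 : (((((m:ℝ) + 2) * β (m + 2)) : ℝ) : ℂ) = ((((m:ℝ) + 1) * β m : ℝ) : ℂ) := by
        exact_mod_cast congrArg Complex.ofReal h
      push_cast at h2
      linear_combination h2
    push_cast
    linear_combination z^(m+1) * hrec
  -- step 2 : z^2 * Qs z = ∑' m, m β m z^(m+1)
  have e2 : z^2 * Qs z = ∑' m : ℕ, (m : ℂ) * ((β m : ℝ) : ℂ) * z ^ (m+1) := by
    rw [Qs, ← tsum_mul_left, Summable.tsum_eq_zero_add hb']
    norm_num
    refine tsum_congr fun m => ?_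
    push_cast
    ring
  -- step 3 : z * Ps z = ∑' m, β m z^(m+1)
  have e3 : z * Ps z = ∑' m : ℕ, ((β m : ℝ) : ℂ) * z ^ (m+1) := by
    rw [Ps, ← tsum_mul_left]
    refine tsum_congr fun m => ?_
    ring
  -- step 4 : split
  have e4 : ∑' m : ℕ, (((m : ℂ) + 1) * ((β m : ℝ) : ℂ)) * z ^ (m+1)
      = (∑' m : ℕ, (m : ℂ) * ((β m : ℝ) : ℂ) * z ^ (m+1))
        + ∑' m : ℕ, ((β m : ℝ) : ℂ) * z ^ (m+1) := by
    rw [← Summable.tsum_add hb' hc']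
    refine tsum_congr fun m => ?_
    ring
  linear_combination e1 + e4 - e2 - e3

/-! ### constancy on the ball -/

lemma const_of_deriv_zero {f : ℂ → ℂ}
    (hf : ∀ w ∈ Metric.ball (0:ℂ) 1, HasDerivAt f 0 w) {z : ℂ} (hz : ‖z‖ < 1) :
    f z = f 0 := by
  refine Convex.is_const_of_fderivWithin_eq_zero (𝕜 := ℂ) (convex_ball (0:ℂ) 1)
    (fun w hw => (hf w hw).differentiableAt.differentiableWithinAt) ?_
    (mem_ball_zero_iff.mpr hz) (Metric.mem_ball_self one_pos)
  intro w hw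
  rw [fderivWithin_of_isOpen Metric.isOpen_ball hw, (hf w hw).hasFDerivAt.fderiv]
  ext u
  simp

lemma Ps_zero : Ps 0 = ((π : ℝ) : ℂ) := by
  rw [Ps, tsum_eq_single 0 (fun m hm => by simp [zero_pow hm])]
  simp [β_zero]

lemma ss_zero : ss 0 = 1 := by
  rw [ss]
  norm_num

lemma Ps_ss {z : ℂ} (hz : ‖z‖ < 1) :
    Ps z * ss z = ((π : ℝ) : ℂ) + 2 * carcsin z := by
  have key : ∀ w ∈ Metric.ball (0:ℂ) 1,
      HasDerivAt (fun y => Ps y * ss y - 2 * carcsin y) 0 w := by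
    intro w hw
    rw [mem_ball_zero_iff] at hw
    have hd := ((hasDerivAt_Ps hw).mul (hasDerivAt_ss hw)).sub
      ((hasDerivAt_carcsin hw).const_mul 2)
    refine hd.congr_deriv ?_
    symm
    have hs0 : ss w ≠ 0 := ss_ne_zero hw
    have hss2 : ss w * ss w = 1 - w^2 := by
      have h1 := sq_half_pow (1 - w^2)
      rw [ss]
      linear_combination h1
    have ho := ode hw
    field_simp
    linear_combination (-1 : ℂ) * ho - Qs w * hss2
  have h := const_of_deriv_zero key hz
  rw [Ps_zero, ss_zero, carcsin_zero] at h
  have : Ps z * ss z - 2 * carcsin z = ((π:ℝ):ℂ) := by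
    rw [h]; ring
  linear_combination this

lemma Fs_zero : Fs 0 = 0 := by
  rw [Fs]
  simp

lemma Fs_eq_on_ball {z : ℂ} (hz : ‖z‖ < 1) :
    Fs z = 1 / (2 * (π:ℂ)) * carcsin z + 1 / (2 * (π:ℂ)^2) * carcsin z ^ 2 := by
  have hπ : ((π:ℝ):ℂ) ≠ 0 := Complex.ofReal_ne_zero.mpr Real.pi_pos.ne'
  have key : ∀ w ∈ Metric.ball (0:ℂ) 1,
      HasDerivAt (fun y => Fs y -
        (1 / (2 * (π:ℂ)) * carcsin y + 1 / (2 * (π:ℂ)^2) * carcsin y ^ 2)) 0 w := by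
    intro w hw
    rw [mem_ball_zero_iff] at hw
    have hA := hasDerivAt_carcsin hw
    have hd := (hasDerivAt_Fs hw).sub
      ((hA.const_mul (1 / (2 * (π:ℂ)))).add
        (((hA.pow 2).const_mul (1 / (2 * (π:ℂ)^2)))))
    refine hd.congr_deriv ?_
    symm
    have hs0 : ss w ≠ 0 := ss_ne_zero hw
    have hP := Ps_ss hw
    have hPval : Ps w = (((π:ℝ):ℂ) + 2 * carcsin w) * (ss w)⁻¹ :=
      (eq_mul_inv_iff_mul_eq₀ hs0).mpr hP
    rw [hPval]
    generalize (ss w)⁻¹ = u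
    field_simp
    ring
  have h := const_of_deriv_zero key hz
  rw [Fs_zero, carcsin_zero] at h
  norm_num at h
  linear_combination h

/-! ### boundary -/

lemma continuousOn_Fs : ContinuousOn Fs (Metric.closedBall (0:ℂ) 1) := by
  refine continuousOn_tsum (fun m => ?_) (summable_u.mul_left (Real.sqrt π / π ^ 2))
    (fun m x hx => ?_)
  · exact ((continuous_pow (m+1)).mul continuous_const).div_const _ |>.continuousOn
  · rw [Metric.mem_closedBall, dist_zero_right] at hx
    exact term_le hx m

lemma slit_or {v : ℂ} (hv : ‖v‖ ≤ 1) :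
    (1 - v ^ 2) ∈ Complex.slitPlane ∨ v ^ 2 = 1 := by
  by_cases him : (1 - v^2).im ≠ 0
  · exact Or.inl (Complex.mem_slitPlane_iff.mpr (Or.inr him))
  · push_neg at him
    by_cases hre : 0 < (1 - v^2).re
    · exact Or.inl (Complex.mem_slitPlane_iff.mpr (Or.inl hre))
    · push_neg at hre
      right
      have h1 : (v^2).re ≥ 1 := by
        have : (1 - v^2).re = 1 - (v^2).re := by simp
        rw [this] at hre
        linarith
      have h2 : (v^2).re ≤ ‖v^2‖ := by
        calc (v^2).re ≤ |(v^2).re| := le_abs_self _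
          _ ≤ ‖v^2‖ := Complex.abs_re_le_norm _
          _ = ‖v^2‖ := rfl
      have h3 : ‖v^2‖ ≤ 1 := by
        rw [norm_pow]
        nlinarith [norm_nonneg v]
      have h4 : (v^2).re = 1 := le_antisymm (by linarith) h1
      have h5 : (v^2).im = 0 := by
        have : (1 - v^2).im = -(v^2).im := by simp
        rw [this] at him
        linarith
      exact Complex.ext (by simp [h4]) (by simp [h5])

lemma continuousAt_sqrt_part {v : ℂ} (hv : ‖v‖ ≤ 1) :
    ContinuousAt (fun z : ℂ => (1 - z ^ 2) ^ ((1:ℂ)/2)) v := by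
  rcases slit_or hv with h | h
  · exact ContinuousAt.cpow ((continuous_const.sub (continuous_pow 2)).continuousAt)
      continuousAt_const h
  · have hbase : (1 : ℂ) - v ^ 2 = 0 := by rw [h]; ring
    have hg : ContinuousAt (fun p : ℂ × ℂ => p.1 ^ p.2) ((1:ℂ) - v ^ 2, ((1:ℂ)/2)) := by
      rw [hbase]
      exact Complex.continuousAt_cpow_zero_of_re_pos (by norm_num)
    have hf : ContinuousAt (fun z : ℂ => ((1 : ℂ) - z ^ 2, ((1:ℂ)/2))) v :=
      ((continuous_const.sub (continuous_pow 2)).prodMk continuous_const).continuousAt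
    exact hg.comp_of_eq hf rfl

lemma continuousAt_carcsin {v : ℂ} (hv : ‖v‖ ≤ 1) : ContinuousAt carcsin v := by
  have hw : ContinuousAt (fun z : ℂ => Complex.I * z + (1 - z ^ 2) ^ ((1:ℂ)/2)) v :=
    ((continuous_const.mul continuous_id).continuousAt).add (continuousAt_sqrt_part hv)
  have hlog : ContinuousAt (fun z : ℂ =>
      Complex.log (Complex.I * z + (1 - z ^ 2) ^ ((1:ℂ)/2))) v :=
    hw.clog (w_mem_slitPlane v)
  exact continuousAt_const.mul hlog

lemma Fs_eq_on_closed {v : ℂ} (hv : ‖v‖ ≤ 1) :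
    Fs v = 1 / (2 * (π:ℂ)) * carcsin v + 1 / (2 * (π:ℂ)^2) * carcsin v ^ 2 := by
  rcases lt_or_eq_of_le hv with hlt | heq
  · exact Fs_eq_on_ball hlt
  · set G : ℂ → ℂ := fun z => 1 / (2 * (π:ℂ)) * carcsin z + 1 / (2 * (π:ℂ)^2) * carcsin z ^ 2
      with hG
    have hGc : ContinuousAt G v := by
      have hA := continuousAt_carcsin hv
      exact (continuousAt_const.mul hA).add (continuousAt_const.mul (hA.pow 2))
    set l : Filter ℝ := nhdsWithin (1:ℝ) (Set.Ico (0:ℝ) 1) with hl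
    have hne : l.NeBot := by
      rw [hl]
      refine mem_closure_iff_nhdsWithin_neBot.mp ?_
      rw [closure_Ico (by norm_num : (0:ℝ) ≠ 1)]
      exact ⟨by norm_num, le_refl 1⟩
    set p : ℝ → ℂ := fun r => (r : ℂ) * v with hp
    have hmaps : ∀ r ∈ Set.Ico (0:ℝ) 1, ‖p r‖ < 1 := by
      intro r hr
      rw [hp]
      simp only [norm_mul, Complex.norm_real, Real.norm_eq_abs,
        _root_.abs_of_nonneg hr.1, heq, mul_one]
      exact hr.2
    have htends : Filter.Tendsto p l (nhds v) := by
      have hc : Continuous p := Complex.continuous_ofReal.mul continuous_const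
      have h1 := hc.tendsto 1
      rw [show p 1 = v by rw [hp]; simp] at h1
      exact h1.mono_left nhdsWithin_le_nhds
    have hFt : Filter.Tendsto (fun r => Fs (p r)) l (nhds (Fs v)) := by
      have hcw : ContinuousWithinAt Fs (Metric.closedBall 0 1) v :=
        continuousOn_Fs v (by simpa [Metric.mem_closedBall, dist_zero_right] using hv)
      refine hcw.tendsto.comp ?_
      refine tendsto_nhdsWithin_of_tendsto_nhds_of_eventually_within _ htends ?_
      filter_upwards [self_mem_nhdsWithin] with r hr
      have h2 := hmaps r hr
      simp only [Metric.mem_closedBall, dist_zero_right]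
      exact h2.le
    have hGt : Filter.Tendsto (fun r => G (p r)) l (nhds (G v)) := hGc.tendsto.comp htends
    have heq2 : (fun r => Fs (p r)) =ᶠ[l] fun r => G (p r) := by
      filter_upwards [self_mem_nhdsWithin] with r hr
      exact Fs_eq_on_ball (hmaps r hr)
    exact tendsto_nhds_unique (hFt.congr' heq2) hGt

end SAux

theorem S_series (v : ℂ) (hv : ‖v‖ ≤ 1) :
    Summable (fun m : ℕ =>
      ‖v ^ (m + 1) * (Beta (((m : ℝ) + 1) / 2) (1 / 2) : ℂ) /
        (2 * (π : ℂ) ^ 2 * ((m : ℂ) + 1))‖) ∧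
    (∑' m : ℕ, v ^ (m + 1) * (Beta (((m : ℝ) + 1) / 2) (1 / 2) : ℂ) /
        (2 * (π : ℂ) ^ 2 * ((m : ℂ) + 1))) =
      (1 / (2 * (π : ℂ))) * carcsin v + (1 / (2 * (π : ℂ) ^ 2)) * carcsin v ^ 2 := by
  constructor
  · exact SAux.summable_norm_term hv
  · exact SAux.Fs_eq_on_closed hv
end

section
/- The double sum ∑_{n=0}^{N-1} ∑_{m=N}^{∞} 1/(n+m+1)^2 is bounded uniformly in N; i.e., sup_N ∑_{n=0}^{N-1} ∑_{m=N}^{∞} 1/(n+m+1)^2 < ∞. -/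
theorem hilbert_offcorner_bounded :
    ∃ C : ℝ, ∀ N : ℕ,
      (∑ n ∈ Finset.range N, ∑' m : ℕ,
          (1 : ℝ) / ((n : ℝ) + ((N : ℝ) + (m : ℝ)) + 1) ^ 2) ≤ C := by
  use 1
  intro N
  rcases Nat.eq_zero_or_pos N with h | h
  · subst h; simp
  have hN1 : (1:ℝ) ≤ (N:ℝ) := by exact_mod_cast h
  have key : ∀ n ∈ Finset.range N,
      (∑' m : ℕ, (1:ℝ) / ((n:ℝ) + ((N:ℝ) + (m:ℝ)) + 1)^2) ≤ (1:ℝ) / (N:ℝ) := by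
    intro n hn
    have hn0 : (0:ℝ) ≤ (n:ℝ) := Nat.cast_nonneg n
    set a : ℝ := (n:ℝ) + N with hadef
    have ha0 : 0 < a := by positivity
    have htsum : (∑' m : ℕ, (1:ℝ) / (a + m + 1)^2) ≤ 1 / a := by
      apply Real.tsum_le_of_sum_range_le
      · intro m; positivity
      · intro M
        have hb : ∀ m : ℕ, (1:ℝ)/(a+m+1)^2 ≤ 1/(a+m) - 1/(a+m+1) := by
          intro m
          have h1 : (0:ℝ) < a + m := by positivity
          have h2 : (0:ℝ) < a + m + 1 := by positivity
          rw [div_sub_div _ _ (ne_of_gt h1) (ne_of_gt h2)]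
          rw [div_le_div_iff₀ (by positivity) (by positivity)]
          ring_nf
          nlinarith
        calc ∑ m ∈ Finset.range M, (1:ℝ)/(a+m+1)^2
            ≤ ∑ m ∈ Finset.range M, ((1:ℝ)/(a+m) - 1/(a+m+1)) :=
              Finset.sum_le_sum fun m _ => hb m
          _ = 1/a - 1/(a+M) := by
              induction M with
              | zero => simp
              | succ k ih => rw [Finset.sum_range_succ, ih]; push_cast; ring
          _ ≤ 1/a := by
              have : (0:ℝ) ≤ 1/(a+M) := by positivity
              linarith
    have heq : (∑' m : ℕ, (1:ℝ) / ((n:ℝ) + ((N:ℝ) + (m:ℝ)) + 1)^2)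
        = ∑' m : ℕ, (1:ℝ) / (a + m + 1)^2 := by
      congr 1; funext m; rw [hadef]; ring_nf
    rw [heq]
    refine htsum.trans ?_
    apply one_div_le_one_div_of_le
    · linarith
    · rw [hadef]; linarith
  calc (∑ n ∈ Finset.range N, ∑' m : ℕ,
          (1 : ℝ) / ((n : ℝ) + ((N : ℝ) + (m : ℝ)) + 1) ^ 2)
      ≤ ∑ _n ∈ Finset.range N, (1:ℝ)/N := Finset.sum_le_sum key
    _ = 1 := by
        rw [Finset.sum_const, Finset.card_range, nsmul_eq_mul]
        field_simp
end

section
/- Let z be on the unit circle with Im(z) ≠ 0, and let H_N be the N×N Hilbert matrix with entries 1/(π(n+m+1)), 0 ≤ n, m ≤ N−1, and U_{z²} the diagonal matrix with entries z^{2n}. Then the matrix entries of H_N U_{z²} H_N satisfy |(H_N U_{z²} H_N)(n,m)| ≤ (2/|1 − z²|) · 1/((1+n)(1+m)) for all 0 ≤ n, m ≤ N−1, uniformly in N. -/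
open Real

theorem hilbert_oscillating_product_bound (z : ℂ) (hz : ‖z‖ = 1) (hIm : z.im ≠ 0)
    (N : ℕ) (n m : ℕ) (hn : n < N) (hm : m < N) :
    ‖∑ l ∈ Finset.range N,
        z ^ (2 * l) / ((π : ℂ) ^ 2 * ((n : ℂ) + (l : ℂ) + 1) * ((l : ℂ) + (m : ℂ) + 1))‖ ≤
      2 / ‖1 - z ^ 2‖ * (1 / ((1 + (n : ℝ)) * (1 + (m : ℝ)))) := by
  set w : ℂ := z ^ 2 with hw
  have hw1 : ‖w‖ = 1 := by rw [hw, norm_pow, hz, one_pow]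
  have hwne : w ≠ 1 := by
    intro h
    have h2 : (z - 1) * (z + 1) = 0 := by linear_combination h
    rcases mul_eq_zero.mp h2 with h3 | h3
    · apply hIm; rw [sub_eq_zero] at h3; rw [h3]; simp
    · apply hIm; rw [add_eq_zero_iff_eq_neg] at h3; rw [h3]; simp
  have hwpos : (0:ℝ) < ‖1 - w‖ := by
    rw [norm_pos_iff, sub_ne_zero]; exact fun h => hwne h.symm
  set B : ℝ := 2 / ‖1 - w‖ with hB
  have hBnn : 0 ≤ B := by positivity
  -- geometric partial sums
  have hG : ∀ k : ℕ, ‖∑ i ∈ Finset.range k, w ^ i‖ ≤ B := by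
    intro k
    rw [geom_sum_eq hwne]
    rw [norm_div]
    rw [div_le_div_iff₀ (by rw [norm_sub_rev]; exact hwpos) hwpos]
    calc ‖w ^ k - 1‖ * ‖1 - w‖ ≤ (‖w ^ k‖ + ‖(1:ℂ)‖) * ‖1 - w‖ := by
          gcongr; exact norm_sub_le _ _
      _ = 2 * ‖w - 1‖ := by rw [norm_pow, hw1, one_pow, norm_one, norm_sub_rev]; ring
  set a : ℕ → ℝ := fun l => 1 / (π ^ 2 * ((n:ℝ) + l + 1) * ((l:ℝ) + m + 1)) with ha
  have hapos : ∀ l, 0 < a l := by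
    intro l; apply div_pos one_pos; positivity
  have hamono : ∀ l, a (l + 1) ≤ a l := by
    intro l
    apply div_le_div_of_nonneg_left one_pos.le (by positivity)
    have : (0:ℝ) < π ^ 2 := by positivity
    push_cast
    nlinarith [Nat.cast_nonneg (α := ℝ) n, Nat.cast_nonneg (α := ℝ) m,
      Nat.cast_nonneg (α := ℝ) l]
  have hcast : ∀ l, ((a l : ℝ) : ℂ) = 1 / ((π : ℂ) ^ 2 * ((n : ℂ) + (l : ℂ) + 1) * ((l : ℂ) + (m : ℂ) + 1)) := by
    intro l; rw [ha]; push_cast; ring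
  have hsummand : ∀ l : ℕ, z ^ (2 * l) / ((π : ℂ) ^ 2 * ((n : ℂ) + (l : ℂ) + 1) * ((l : ℂ) + (m : ℂ) + 1))
      = ((a l : ℝ) : ℂ) • w ^ l := by
    intro l
    rw [hcast, smul_eq_mul, hw, ← pow_mul]
    ring
  rw [Finset.sum_congr rfl (fun l _ => hsummand l)]
  rw [Finset.sum_range_by_parts (fun l => ((a l : ℝ) : ℂ)) (fun l => w ^ l) N]
  have key : ‖(((a (N-1) : ℝ)) : ℂ) • ∑ i ∈ Finset.range N, w ^ i
      - ∑ i ∈ Finset.range (N - 1), (((a (i+1) : ℝ) : ℂ) - ((a i : ℝ) : ℂ)) • ∑ j ∈ Finset.range (i+1), w ^ j‖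
      ≤ a (N-1) * B + ∑ i ∈ Finset.range (N-1), (a i - a (i+1)) * B := by
    apply le_trans (norm_sub_le _ _)
    gcongr
    · rw [norm_smul, Complex.norm_real, Real.norm_eq_abs, abs_of_pos (hapos _)]
      exact mul_le_mul_of_nonneg_left (hG N) (hapos _).le
    · apply le_trans (norm_sum_le _ _)
      apply Finset.sum_le_sum
      intro i _
      rw [norm_smul, ← Complex.ofReal_sub, Complex.norm_real, Real.norm_eq_abs,
        abs_of_nonpos (by linarith [hamono i])]
      have : -(a (i+1) - a i) = a i - a (i+1) := by ring
      rw [this]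
      exact mul_le_mul_of_nonneg_left (hG (i+1)) (by linarith [hamono i])
  apply key.trans
  have htel : ∑ i ∈ Finset.range (N-1), (a i - a (i+1)) = a 0 - a (N-1) :=
    Finset.sum_range_sub' a (N-1)
  rw [← Finset.sum_mul, htel]
  have ha0 : a 0 ≤ 1 / ((1 + (n:ℝ)) * (1 + (m:ℝ))) := by
    rw [ha]
    simp only
    have hpi : (1:ℝ) ≤ π ^ 2 := by nlinarith [Real.pi_gt_three]
    rw [div_le_div_iff₀ (by positivity) (by positivity)]
    push_cast
    nlinarith [mul_nonneg (mul_nonneg (sub_nonneg.mpr hpi)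
      (by positivity : (0:ℝ) ≤ (n:ℝ)+1)) (by positivity : (0:ℝ) ≤ (m:ℝ)+1)]
  calc a (N-1) * B + (a 0 - a (N-1)) * B = B * a 0 := by ring
    _ ≤ B * (1 / ((1 + (n:ℝ)) * (1 + (m:ℝ)))) :=
        mul_le_mul_of_nonneg_left ha0 hBnn
    _ = 2 / ‖1 - z ^ 2‖ * (1 / ((1 + (n:ℝ)) * (1 + (m:ℝ)))) := by rw [hB, hw]
end
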